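/- arXiv:2011.09963 — 7 statements merged into one kernel-verified Lean document; each statement's English description precedes it below -/
import Mathlib

section
/- Let k ≥ 1 be an integer, let Ω ⊆ ℝ/ℤ be a (2,4)-sum-free set, and let a < b be real numbers such that for every x ∈ (a,b) the point kx mod 1 lies in Ω. Then the image of (a,b) under the quotient map ℝ → ℝ/ℤ is (2k,4k)-sum-free in ℝ/ℤ. -/
private lemma sum_mem_Ioo_smul {a b : ℝ} (k : ℕ) (hk : 1 ≤ k) (u : Fin k → ℝ)
    (hu : ∀ j, u j ∈ Set.Ioo a b) :
    ∃ s ∈ Set.Ioo a b, (k : ℝ) * s = ∑ j, u j := by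
  have hkpos : (0 : ℝ) < k := by exact_mod_cast hk
  refine ⟨(∑ j, u j) / k, ?_, by field_simp⟩
  constructor
  · have h1 : (k : ℝ) * a < ∑ j, u j := by
      have := Finset.sum_lt_sum_of_nonempty
        (s := (Finset.univ : Finset (Fin k))) (f := fun _ => a) (g := u)
        (by simp [Finset.univ_nonempty_iff, ← Fin.pos_iff_nonempty]; omega)
        (fun j _ => (hu j).1)
      simpa [mul_comm] using this
    rw [lt_div_iff₀ hkpos]; linarith [h1]
  · have h2 : ∑ j, u j < (k : ℝ) * b := by
      have := Finset.sum_lt_sum_of_nonempty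
        (s := (Finset.univ : Finset (Fin k))) (f := u) (g := fun _ => b)
        (by simp [Finset.univ_nonempty_iff, ← Fin.pos_iff_nonempty]; omega)
        (fun j _ => (hu j).2)
      simpa [mul_comm] using this
    rw [div_lt_iff₀ hkpos]; linarith [h2]

private lemma regroup {m k : ℕ} (u : Fin (m * k) → ℝ) :
    ∑ i : Fin m, ∑ j : Fin k, u (finProdFinEquiv (i, j)) = ∑ p, u p := by
  exact (Fintype.sum_prod_type (f := fun p : Fin m × Fin k => u (finProdFinEquiv p))).symm.trans
    (Equiv.sum_comp finProdFinEquiv u)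

/-- Let `k ≥ 1`, let `Ω ⊆ ℝ/ℤ` be `(2,4)`-sum-free, and let `a < b` be reals
such that for every `x ∈ (a,b)`, the point `kx mod 1` lies in `Ω`. Then the image of
`(a,b)` in `ℝ/ℤ` is `(2k,4k)`-sum-free. -/
theorem stmt9 (k : ℕ) (hk : 1 ≤ k) (Ω : Set (AddCircle (1 : ℝ)))
    (hΩ : ¬ ∃ (x : Fin 2 → AddCircle (1 : ℝ)) (y : Fin 4 → AddCircle (1 : ℝ)),
      (∀ i, x i ∈ Ω) ∧ (∀ j, y j ∈ Ω) ∧ ∑ i, x i = ∑ j, y j)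
    (a b : ℝ) (hab : a < b)
    (h : ∀ x ∈ Set.Ioo a b, (((k : ℝ) * x : ℝ) : AddCircle (1 : ℝ)) ∈ Ω) :
    ¬ ∃ (x : Fin (2 * k) → AddCircle (1 : ℝ)) (y : Fin (4 * k) → AddCircle (1 : ℝ)),
      (∀ i, x i ∈ (fun t : ℝ => (t : AddCircle (1 : ℝ))) '' Set.Ioo a b) ∧
      (∀ j, y j ∈ (fun t : ℝ => (t : AddCircle (1 : ℝ))) '' Set.Ioo a b) ∧
      ∑ i, x i = ∑ j, y j := by
  rintro ⟨x, y, hx, hy, hsum⟩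
  choose u hu hux using hx
  choose v hv hvy using hy
  set π : ℝ →+ AddCircle (1 : ℝ) :=
    QuotientAddGroup.mk' (AddSubgroup.zmultiples (1 : ℝ)) with hπ
  apply hΩ
  refine ⟨fun i => π (∑ j : Fin k, u (finProdFinEquiv (i, j))),
          fun i => π (∑ j : Fin k, v (finProdFinEquiv (i, j))), ?_, ?_, ?_⟩
  · intro i
    obtain ⟨s, hs, hseq⟩ := sum_mem_Ioo_smul k hk _ (fun j => hu (finProdFinEquiv (i, j)))
    have := h s hs
    rwa [hseq] at this
  · intro i
    obtain ⟨s, hs, hseq⟩ := sum_mem_Ioo_smul k hk _ (fun j => hv (finProdFinEquiv (i, j)))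
    have := h s hs
    rwa [hseq] at this
  · rw [← map_sum, ← map_sum, regroup, regroup]
    have hx' : ∀ p, π (u p) = x p := fun p => hux p
    have hy' : ∀ p, π (v p) = y p := fun p => hvy p
    rw [map_sum, map_sum]
    simp only [hx', hy']
    exact hsum
end

section
/- Let Q ≥ 3 be a real number. Define γ(n) = 1 if n ≡ 1 (mod 4), γ(n) = −1 if n ≡ 3 (mod 4), and γ(n) = 0 if n is even. Then for every odd positive integer n, the sum Σ_{t | n, t squarefree, every prime factor of t ≤ Q} μ(t) · γ(n/t) · sin(πn/(6t)) equals: 1/2 if every prime factor of n is greater than Q; −3/2 if 3 divides n and every prime factor of n/3 is greater than Q; and 0 otherwise. (In particular it equals 1/2 for n = 1 and −3/2 for n = 3.) -/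
open scoped Classical

open Finset in
lemma my_sf_prod_primes {s : Finset ℕ} (hs : ∀ p ∈ s, p.Prime) :
    Squarefree (∏ p ∈ s, p) := by
  classical
  induction s using Finset.induction_on with
  | empty => simpa using squarefree_one
  | @insert a s ha ih =>
    rw [Finset.prod_insert ha]
    have hp := hs a (mem_insert_self _ _)
    have hcop : Nat.Coprime a (∏ p ∈ s, p) := by
      rw [hp.coprime_iff_not_dvd]
      intro hd
      obtain ⟨q, hq, hpq⟩ := (hp.prime.dvd_finset_prod_iff _).mp hd
      have := (Nat.prime_dvd_prime_iff_eq hp (hs q (mem_insert_of_mem hq))).mp hpq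
      exact ha (this ▸ hq)
    exact (Nat.squarefree_mul hcop).mpr
      ⟨hp.squarefree, ih fun p hp' => hs p (mem_insert_of_mem hp')⟩

lemma my_moebius_sum (k : ℕ) :
    (∑ d ∈ k.divisors, (ArithmeticFunction.moebius d : ℤ)) = if k = 1 then 1 else 0 := by
  rw [← ArithmeticFunction.coe_zeta_mul_apply, ArithmeticFunction.coe_zeta_mul_moebius,
    ArithmeticFunction.one_apply]

open Finset in
lemma my_filter_eq (Q : ℝ) {n : ℕ} (hn : 0 < n) :
    n.divisors.filter (fun t => Squarefree t ∧ ∀ p : ℕ, p.Prime → p ∣ t → (p : ℝ) ≤ Q)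
      = (∏ p ∈ n.primeFactors.filter (fun p : ℕ => (p : ℝ) ≤ Q), p).divisors := by
  set s := n.primeFactors.filter (fun p : ℕ => (p : ℝ) ≤ Q) with hs
  have hsp : ∀ p ∈ s, p.Prime := fun p hp =>
    Nat.prime_of_mem_primeFactors (Finset.mem_filter.mp hp).1
  have hk0 : (∏ p ∈ s, p) ≠ 0 :=
    Finset.prod_ne_zero_iff.mpr fun p hp => (hsp p hp).ne_zero
  have hksf := my_sf_prod_primes hsp
  have hkn : (∏ p ∈ s, p) ∣ n :=
    dvd_trans (Finset.prod_dvd_prod_of_subset _ _ _ (Finset.filter_subset _ _))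
      (Nat.prod_primeFactors_dvd n)
  ext t
  simp only [Finset.mem_filter, Nat.mem_divisors]
  constructor
  · rintro ⟨⟨htn, _⟩, htsf, htQ⟩
    refine ⟨?_, hk0⟩
    have hsub : t.primeFactors ⊆ s := by
      intro p hp
      have hpp := Nat.prime_of_mem_primeFactors hp
      have hpt : p ∣ t := Nat.dvd_of_mem_primeFactors hp
      exact Finset.mem_filter.mpr
        ⟨Nat.mem_primeFactors.mpr ⟨hpp, hpt.trans htn, hn.ne'⟩, htQ p hpp hpt⟩
    calc t = ∏ p ∈ t.primeFactors, p := (Nat.prod_primeFactors_of_squarefree htsf).symm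
      _ ∣ ∏ p ∈ s, p := Finset.prod_dvd_prod_of_subset _ _ _ hsub
  · rintro ⟨htk, _⟩
    refine ⟨⟨htk.trans hkn, hn.ne'⟩, hksf.squarefree_of_dvd htk, ?_⟩
    intro p hp hpt
    obtain ⟨q, hq, hpq⟩ := (hp.prime.dvd_finset_prod_iff _).mp (hpt.trans htk)
    have heq := (Nat.prime_dvd_prime_iff_eq hp (hsp q hq)).mp hpq
    subst heq
    exact (Finset.mem_filter.mp hq).2

open Finset in
lemma my_sum_moebius_filter (Q : ℝ) {n : ℕ} (hn : 0 < n) :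
    (∑ t ∈ n.divisors.filter
        (fun t => Squarefree t ∧ ∀ p : ℕ, p.Prime → p ∣ t → (p : ℝ) ≤ Q),
      (ArithmeticFunction.moebius t : ℤ))
      = if (∀ p : ℕ, p.Prime → p ∣ n → Q < (p : ℝ)) then 1 else 0 := by
  rw [my_filter_eq Q hn, my_moebius_sum]
  set s := n.primeFactors.filter (fun p : ℕ => (p : ℝ) ≤ Q) with hs
  have key : (∏ p ∈ s, p) = 1 ↔ ∀ p : ℕ, p.Prime → p ∣ n → Q < (p : ℝ) := by
    constructor
    · intro h1 p hp hpn
      by_contra hle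
      push_neg at hle
      have hps : p ∈ s := Finset.mem_filter.mpr
        ⟨Nat.mem_primeFactors.mpr ⟨hp, hpn, hn.ne'⟩, hle⟩
      have : p ∣ 1 := h1 ▸ Finset.dvd_prod_of_mem _ hps
      exact absurd (Nat.dvd_one.mp this) hp.one_lt.ne'
    · intro hA
      have hse : s = ∅ := by
        rw [Finset.eq_empty_iff_forall_notMem]
        intro p hps
        obtain ⟨hpf, hle⟩ := Finset.mem_filter.mp hps
        obtain ⟨hp, hpn, -⟩ := Nat.mem_primeFactors.mp hpf
        exact absurd hle (not_le.mpr (hA p hp hpn))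
      rw [hse, Finset.prod_empty]
  by_cases hA : ∀ p : ℕ, p.Prime → p ∣ n → Q < (p : ℝ)
  · rw [if_pos hA, if_pos (key.mpr hA)]
  · rw [if_neg hA, if_neg (fun h => hA (key.mp h))]

lemma my_filter3 (Q : ℝ) {n : ℕ} (hn : 0 < n) (h3 : 3 ∣ n) :
    (n.divisors.filter
        (fun t => Squarefree t ∧ ∀ p : ℕ, p.Prime → p ∣ t → (p : ℝ) ≤ Q)).filter
      (fun t => 3 ∣ n / t)
    = (n / 3).divisors.filter
        (fun t => Squarefree t ∧ ∀ p : ℕ, p.Prime → p ∣ t → (p : ℝ) ≤ Q) := by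
  have hn3 : n / 3 ≠ 0 := (Nat.div_pos (Nat.le_of_dvd hn h3) (by norm_num)).ne'
  ext t
  simp only [Finset.mem_filter, Nat.mem_divisors]
  constructor
  · rintro ⟨⟨⟨htn, hne⟩, hsf, hQ'⟩, h3t⟩
    have h3tn : t * 3 ∣ n := (Nat.dvd_div_iff_mul_dvd htn).mp h3t
    exact ⟨⟨(Nat.dvd_div_iff_mul_dvd h3).mpr (by rwa [mul_comm] at h3tn), hn3⟩, hsf, hQ'⟩
  · rintro ⟨⟨htn3, -⟩, hsf, hQ'⟩
    have h3tn : 3 * t ∣ n := (Nat.dvd_div_iff_mul_dvd h3).mp htn3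
    have htn : t ∣ n := (dvd_mul_left t 3).trans h3tn
    exact ⟨⟨⟨htn, hn.ne'⟩, hsf, hQ'⟩,
      (Nat.dvd_div_iff_mul_dvd htn).mpr (by rwa [mul_comm] at h3tn)⟩

lemma my_sin_eq (m : ℕ) (hm : m % 2 = 1) :
    (if m % 4 = 1 then (1 : ℝ) else if m % 4 = 3 then -1 else 0)
      * Real.sin (Real.pi * m / 6)
    = if 3 ∣ m then -1 else 1 / 2 := by
  have hm3 : (3 ∣ m % 12) ↔ (3 ∣ m) := Nat.dvd_mod_iff (by norm_num)
  have hsin : Real.sin (Real.pi * m / 6) = Real.sin (Real.pi * (m % 12 : ℕ) / 6) := by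
    conv_lhs => rw [← Nat.div_add_mod m 12]
    push_cast
    have : Real.pi * (12 * ((m / 12 : ℕ) : ℝ) + ((m % 12 : ℕ) : ℝ)) / 6
        = Real.pi * ((m % 12 : ℕ) : ℝ) / 6 + ((m / 12 : ℕ) : ℝ) * (2 * Real.pi) := by ring
    rw [this, Real.sin_add_nat_mul_two_pi]
  have hiff : (if 3 ∣ m then (-1 : ℝ) else 1 / 2) = if 3 ∣ m % 12 then -1 else 1 / 2 := by
    by_cases h : 3 ∣ m
    · rw [if_pos h, if_pos (hm3.mpr h)]
    · rw [if_neg h, if_neg (fun hh => h (hm3.mp hh))]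
  rw [hsin, hiff]
  have h12 : m % 12 = 1 ∨ m % 12 = 3 ∨ m % 12 = 5 ∨ m % 12 = 7 ∨ m % 12 = 9 ∨ m % 12 = 11 := by
    omega
  rcases h12 with h | h | h | h | h | h
  · have h4 : m % 4 = 1 := by omega
    rw [h, h4]
    have : Real.pi * ((1 : ℕ) : ℝ) / 6 = Real.pi / 6 := by push_cast; ring
    rw [this, Real.sin_pi_div_six]
    norm_num
  · have h4 : m % 4 = 3 := by omega
    rw [h, h4]
    have : Real.pi * ((3 : ℕ) : ℝ) / 6 = Real.pi / 2 := by push_cast; ring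
    rw [this, Real.sin_pi_div_two]
    norm_num
  · have h4 : m % 4 = 1 := by omega
    rw [h, h4]
    have : Real.pi * ((5 : ℕ) : ℝ) / 6 = Real.pi - Real.pi / 6 := by push_cast; ring
    rw [this, Real.sin_pi_sub, Real.sin_pi_div_six]
    norm_num
  · have h4 : m % 4 = 3 := by omega
    rw [h, h4]
    have : Real.pi * ((7 : ℕ) : ℝ) / 6 = Real.pi - -(Real.pi / 6) := by push_cast; ring
    rw [this, Real.sin_pi_sub, Real.sin_neg, Real.sin_pi_div_six]
    norm_num
  · have h4 : m % 4 = 1 := by omega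
    rw [h, h4]
    have : Real.pi * ((9 : ℕ) : ℝ) / 6 = Real.pi - -(Real.pi / 2) := by push_cast; ring
    rw [this, Real.sin_pi_sub, Real.sin_neg, Real.sin_pi_div_two]
    norm_num
  · have h4 : m % 4 = 3 := by omega
    rw [h, h4]
    have : Real.pi * ((11 : ℕ) : ℝ) / 6 = Real.pi - -(Real.pi - Real.pi / 6) := by
      push_cast; ring
    rw [this, Real.sin_pi_sub, Real.sin_neg, Real.sin_pi_sub, Real.sin_pi_div_six]
    norm_num

/-- Let `Q ≥ 3`. With `γ(n) = 1` for `n ≡ 1 (mod 4)`, `γ(n) = −1` for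
`n ≡ 3 (mod 4)`, `γ(n) = 0` for even `n`, for every odd positive `n`,
`Σ_{t ∣ n, t squarefree, all prime factors of t ≤ Q} μ(t) γ(n/t) sin(πn/(6t))` equals
`1/2` if all prime factors of `n` exceed `Q`; `−3/2` if `3 ∣ n` and all prime factors of
`n/3` exceed `Q`; and `0` otherwise. -/
theorem stmt10 (Q : ℝ) (hQ : 3 ≤ Q) (n : ℕ) (hn : 0 < n) (hodd : Odd n)
    (γ : ℕ → ℝ)
    (hγ : ∀ m : ℕ, γ m = if m % 4 = 1 then 1 else if m % 4 = 3 then -1 else 0)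
    (T : ℝ)
    (hT : T = ∑ t ∈ n.divisors.filter
        (fun t => Squarefree t ∧ ∀ p : ℕ, p.Prime → p ∣ t → (p : ℝ) ≤ Q),
      (ArithmeticFunction.moebius t : ℝ) * γ (n / t) * Real.sin (Real.pi * n / (6 * t))) :
    ((∀ p : ℕ, p.Prime → p ∣ n → Q < (p : ℝ)) → T = 1/2) ∧
    ((3 ∣ n ∧ ∀ p : ℕ, p.Prime → p ∣ (n / 3) → Q < (p : ℝ)) → T = -(3/2)) ∧
    ((¬ (∀ p : ℕ, p.Prime → p ∣ n → Q < (p : ℝ)) ∧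
      ¬ (3 ∣ n ∧ ∀ p : ℕ, p.Prime → p ∣ (n / 3) → Q < (p : ℝ))) → T = 0) := by
  set S := n.divisors.filter
      (fun t => Squarefree t ∧ ∀ p : ℕ, p.Prime → p ∣ t → (p : ℝ) ≤ Q) with hS
  -- Step 1: rewrite each term
  have hterm : ∀ t ∈ S, (ArithmeticFunction.moebius t : ℝ) * γ (n / t)
      * Real.sin (Real.pi * n / (6 * t))
      = (1/2) * (ArithmeticFunction.moebius t : ℝ)
        - (3/2) * (if 3 ∣ n / t then (ArithmeticFunction.moebius t : ℝ) else 0) := by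
    intro t ht
    obtain ⟨htd, -⟩ := Finset.mem_filter.mp ht
    obtain ⟨htn, -⟩ := Nat.mem_divisors.mp htd
    have ht0 : t ≠ 0 := fun h => by simp [h] at htn; omega
    have hcast : ((n / t : ℕ) : ℝ) = (n : ℝ) / (t : ℝ) :=
      Nat.cast_div htn (Nat.cast_ne_zero.mpr ht0)
    have hsin : Real.pi * n / (6 * t) = Real.pi * ((n / t : ℕ) : ℝ) / 6 := by
      rw [hcast]
      have ht0' : (t : ℝ) ≠ 0 := Nat.cast_ne_zero.mpr ht0
      field_simp
    have hoddq : (n / t) % 2 = 1 := by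
      have hdvd : n / t ∣ n := Nat.div_dvd_of_dvd htn
      obtain ⟨c, hc⟩ := hdvd
      rcases Nat.even_or_odd (n / t) with he | ho
      · exact absurd (hc ▸ he.mul_right c) (Nat.not_even_iff_odd.mpr hodd)
      · exact Nat.odd_iff.mp ho
    rw [hsin, hγ, mul_assoc, my_sin_eq _ hoddq]
    by_cases h3 : 3 ∣ n / t <;> simp [h3] <;> ring
  rw [Finset.sum_congr rfl hterm, Finset.sum_sub_distrib, ← Finset.mul_sum,
    ← Finset.mul_sum, ← Finset.sum_filter] at hT
  -- Step 2: evaluate the two inner sums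
  have hS1 : (∑ t ∈ S, (ArithmeticFunction.moebius t : ℝ))
      = if (∀ p : ℕ, p.Prime → p ∣ n → Q < (p : ℝ)) then 1 else 0 := by
    have := my_sum_moebius_filter Q hn
    rw [hS]
    calc (∑ t ∈ n.divisors.filter
          (fun t => Squarefree t ∧ ∀ p : ℕ, p.Prime → p ∣ t → (p : ℝ) ≤ Q),
          (ArithmeticFunction.moebius t : ℝ))
        = ((∑ t ∈ n.divisors.filter
          (fun t => Squarefree t ∧ ∀ p : ℕ, p.Prime → p ∣ t → (p : ℝ) ≤ Q),
          (ArithmeticFunction.moebius t : ℤ) : ℤ) : ℝ) := by push_cast; rfl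
      _ = _ := by rw [this]; split <;> norm_num
  have hS2 : (∑ t ∈ S.filter (fun t => 3 ∣ n / t), (ArithmeticFunction.moebius t : ℝ))
      = if (3 ∣ n ∧ ∀ p : ℕ, p.Prime → p ∣ (n / 3) → Q < (p : ℝ)) then 1 else 0 := by
    by_cases h3 : 3 ∣ n
    · have hn3 : 0 < n / 3 := Nat.div_pos (Nat.le_of_dvd hn h3) (by norm_num)
      rw [hS, my_filter3 Q hn h3]
      have := my_sum_moebius_filter Q hn3
      calc (∑ t ∈ (n / 3).divisors.filter
            (fun t => Squarefree t ∧ ∀ p : ℕ, p.Prime → p ∣ t → (p : ℝ) ≤ Q),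
            (ArithmeticFunction.moebius t : ℝ))
          = ((∑ t ∈ (n / 3).divisors.filter
            (fun t => Squarefree t ∧ ∀ p : ℕ, p.Prime → p ∣ t → (p : ℝ) ≤ Q),
            (ArithmeticFunction.moebius t : ℤ) : ℤ) : ℝ) := by push_cast; rfl
        _ = _ := by
            rw [this]
            by_cases hA : ∀ p : ℕ, p.Prime → p ∣ (n / 3) → Q < (p : ℝ)
            · rw [if_pos hA, if_pos ⟨h3, hA⟩]; norm_num
            · rw [if_neg hA, if_neg (fun h => hA h.2)]; norm_num
    · have hempty : S.filter (fun t => 3 ∣ n / t) = ∅ := by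
        rw [Finset.eq_empty_iff_forall_notMem]
        intro t ht
        obtain ⟨htS, h3t⟩ := Finset.mem_filter.mp ht
        obtain ⟨htd, -⟩ := Finset.mem_filter.mp htS
        obtain ⟨htn, -⟩ := Nat.mem_divisors.mp htd
        exact h3 (h3t.trans (Nat.div_dvd_of_dvd htn))
      rw [hempty, if_neg (fun h => h3 h.1)]
      simp
  rw [hS1, hS2] at hT
  have h3Q : (3 ∣ n) → ¬(∀ p : ℕ, p.Prime → p ∣ n → Q < (p : ℝ)) := by
    intro h3 hA
    have := hA 3 (by norm_num) h3
    norm_num at this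
    linarith
  refine ⟨?_, ?_, ?_⟩
  · intro hA
    have h3n : ¬ (3 ∣ n) := fun h3 => h3Q h3 hA
    rw [if_pos hA, if_neg (fun h => h3n h.1)] at hT
    rw [hT]; ring
  · rintro ⟨h3, hA⟩
    rw [if_neg (h3Q h3), if_pos ⟨h3, hA⟩] at hT
    rw [hT]; ring
  · rintro ⟨h1, h2⟩
    rw [if_neg h1, if_neg h2] at hT
    rw [hT]; ring
end

section
/- For every nonempty finite set A of positive integers, |{k ∈ ℤ_{≥0} : A ∩ [3^k, 3^{k+1}) ≠ ∅}| · |A △ (3·A)| ≥ |A|. In particular, if |A| = N and |A △ (3·A)| ≤ N^{1/2}, then A is (3,1/2)-lacunary. -/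
lemma cancel3 (k : ℕ) : ∀ a b x y : ℕ, 3^k ≤ a → a < 3^(k+1) → 3^k ≤ b → b < 3^(k+1) →
    3^x * a = 3^y * b → a = b := by
  have key : ∀ a b x y : ℕ, x ≤ y → 3^k ≤ a → a < 3^(k+1) → 3^k ≤ b →
      3^x * a = 3^y * b → a = b := by
    intro a b x y hxy ha1 ha2 hb1 h
    obtain ⟨d, rfl⟩ := Nat.exists_eq_add_of_le hxy
    rw [pow_add, mul_assoc] at h
    have hpow : 0 < 3^x := Nat.pow_pos (by norm_num)
    have h' : a = 3^d * b := Nat.eq_of_mul_eq_mul_left hpow h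
    rcases Nat.eq_zero_or_pos d with hd | hd
    · simpa [hd] using h'
    · exfalso
      have h3 : (3:ℕ) ≤ 3^d := by
        calc (3:ℕ) = 3^1 := (pow_one 3).symm
        _ ≤ 3^d := Nat.pow_le_pow_right (by norm_num) hd
      have : 3^(k+1) ≤ a := by
        calc 3^(k+1) = 3 * 3^k := by ring
        _ ≤ 3^d * b := Nat.mul_le_mul h3 hb1
        _ = a := h'.symm
      omega
  intro a b x y ha1 ha2 hb1 hb2 h
  rcases le_total x y with hxy | hxy
  · exact key a b x y hxy ha1 ha2 hb1 h
  · exact (key b a y x hxy hb1 hb2 ha1 h.symm).symm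

/-- For every nonempty finite set `A` of positive integers,
`|{k ≥ 0 : A ∩ [3^k, 3^{k+1}) ≠ ∅}| · |A △ (3·A)| ≥ |A|`. In particular, if `|A| = N`
and `|A △ (3·A)| ≤ N^{1/2}`, then `A` is `(3,1/2)`-lacunary. -/
theorem stmt11 (A : Finset ℕ) (hA : A.Nonempty) (hpos : ∀ n ∈ A, 0 < n) :
    {k : ℕ | ∃ n ∈ A, 3 ^ k ≤ n ∧ n < 3 ^ (k + 1)}.ncard *
        ((A \ A.image (fun a => 3 * a)) ∪ (A.image (fun a => 3 * a) \ A)).card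
      ≥ A.card ∧
    ((((A \ A.image (fun a => 3 * a)) ∪ (A.image (fun a => 3 * a) \ A)).card : ℝ)
        ≤ (A.card : ℝ) ^ ((1 : ℝ)/2) →
      (A.card : ℝ) ^ ((1 : ℝ)/2)
        ≤ ({k : ℕ | ∃ n ∈ A, 3 ^ k ≤ n ∧ n < 3 ^ (k + 1)}.ncard : ℝ)) := by
  classical
  set S : Finset ℕ := (A \ A.image (fun a => 3 * a)) ∪ (A.image (fun a => 3 * a) \ A) with hSdef
  -- the set of occupied scales is the image of A under Nat.log 3
  have hKeq : {k : ℕ | ∃ n ∈ A, 3 ^ k ≤ n ∧ n < 3 ^ (k + 1)} = ↑(A.image (Nat.log 3)) := by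
    ext k
    simp only [Set.mem_setOf_eq, Finset.coe_image, Set.mem_image, Finset.mem_coe]
    constructor
    · rintro ⟨n, hn, h1, h2⟩
      exact ⟨n, hn, Nat.log_eq_of_pow_le_of_lt_pow h1 h2⟩
    · rintro ⟨n, hn, rfl⟩
      exact ⟨n, hn, Nat.pow_log_le_self 3 (hpos n hn).ne',
        Nat.lt_pow_succ_log_self (by norm_num) n⟩
  have hKcard : {k : ℕ | ∃ n ∈ A, 3 ^ k ≤ n ∧ n < 3 ^ (k + 1)}.ncard
      = (A.image (Nat.log 3)).card := by
    rw [hKeq, Set.ncard_coe_finset]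
  -- for every a, some 3^(j+1)*a escapes A
  have hex : ∀ a : ℕ, ∃ j : ℕ, 3 ^ (j + 1) * a ∉ A := by
    intro a
    rcases Nat.eq_zero_or_pos a with h0 | h0
    · exact ⟨0, by simp [h0]; intro h; exact absurd (hpos 0 h) (lt_irrefl 0)⟩
    · set M := A.max' hA with hM
      refine ⟨M, fun hmem => ?_⟩
      have h1 : 3 ^ (M + 1) * a ≤ M := A.le_max' _ hmem
      have h2 : M < 3 ^ M := Nat.lt_pow_self (by norm_num)
      have h3 : 3 ^ M ≤ 3 ^ (M + 1) := Nat.pow_le_pow_right (by norm_num) (Nat.le_succ M)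
      have h4 : 3 ^ (M + 1) ≤ 3 ^ (M + 1) * a := Nat.le_mul_of_pos_right _ h0
      omega
  set j : ℕ → ℕ := fun a => Nat.find (hex a) with hj
  set g : ℕ → ℕ := fun a => 3 ^ (j a + 1) * a with hg
  have hgS : ∀ a ∈ A, g a ∈ S := by
    intro a ha
    have hmid : 3 ^ (j a) * a ∈ A := by
      rcases Nat.eq_zero_or_pos (j a) with h0 | h0
      · simpa [h0] using ha
      · obtain ⟨m, hm⟩ := Nat.exists_eq_succ_of_ne_zero h0.ne'
        have := Nat.find_min (hex a) (m := m) (show m < j a by omega)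
        simp only [not_not] at this
        simpa [hm] using this
    have hgnot : g a ∉ A := Nat.find_spec (hex a)
    have hgim : g a ∈ A.image (fun b => 3 * b) := by
      refine Finset.mem_image.mpr ⟨3 ^ (j a) * a, hmid, ?_⟩
      simp only [hg]
      ring
    rw [hSdef]
    exact Finset.mem_union_right _ (Finset.mem_sdiff.mpr ⟨hgim, hgnot⟩)
  -- injection A → (image log) ×ˢ S
  have hmain : A.card ≤ (A.image (Nat.log 3)).card * S.card := by
    have hcard : A.card ≤ ((A.image (Nat.log 3)) ×ˢ S).card := by
      apply Finset.card_le_card_of_injOn (fun a => (Nat.log 3 a, g a))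
      · intro a ha
        exact Finset.mem_product.mpr ⟨Finset.mem_image_of_mem _ ha, hgS a ha⟩
      · intro a ha b hb hab
        simp only [Prod.mk.injEq] at hab
        obtain ⟨hlog, hgab⟩ := hab
        have ha1 : 3 ^ (Nat.log 3 a) ≤ a := Nat.pow_log_le_self 3 (hpos a ha).ne'
        have ha2 : a < 3 ^ (Nat.log 3 a + 1) := Nat.lt_pow_succ_log_self (by norm_num) a
        have hb1 : 3 ^ (Nat.log 3 a) ≤ b := hlog ▸ Nat.pow_log_le_self 3 (hpos b hb).ne'
        have hb2 : b < 3 ^ (Nat.log 3 a + 1) := hlog ▸ Nat.lt_pow_succ_log_self (by norm_num) b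
        exact cancel3 (Nat.log 3 a) a b (j a + 1) (j b + 1) ha1 ha2 hb1 hb2 hgab
    rwa [Finset.card_product] at hcard
  have h1 : {k : ℕ | ∃ n ∈ A, 3 ^ k ≤ n ∧ n < 3 ^ (k + 1)}.ncard * S.card ≥ A.card := by
    rw [hKcard]; exact hmain
  refine ⟨h1, fun hle => ?_⟩
  set L := {k : ℕ | ∃ n ∈ A, 3 ^ k ≤ n ∧ n < 3 ^ (k + 1)}.ncard
  have hN1 : 1 ≤ A.card := Finset.card_pos.mpr hA
  have hS1 : 1 ≤ S.card := by
    by_contra h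
    have : S.card = 0 := by omega
    rw [this, Nat.mul_zero] at h1
    omega
  have hr : ((A.card : ℝ) ^ ((1:ℝ)/2)) ^ 2 = (A.card : ℝ) := by
    rw [← Real.rpow_natCast ((A.card : ℝ) ^ ((1:ℝ)/2)) 2, ← Real.rpow_mul (by positivity)]
    norm_num
  have hcast : (A.card : ℝ) ≤ (L : ℝ) * (S.card : ℝ) := by
    exact_mod_cast h1
  have hs0 : (1:ℝ) ≤ (S.card : ℝ) := by exact_mod_cast hS1
  have hr0 : (0:ℝ) ≤ (A.card : ℝ) ^ ((1:ℝ)/2) := by positivity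
  have hL0 : (0:ℝ) ≤ (L : ℝ) := by positivity
  nlinarith [mul_le_mul_of_nonneg_left hle hL0]
end

section
/- For every real p ∈ (1,∞) there exists a constant C_p > 0 such that for every nonempty finite set A of positive integers, ( ∫_0^1 | Σ_{n∈A} e(nx) |^p dx )^{1/p} ≥ C_p · |{k ∈ ℤ_{≥0} : A ∩ [3^k, 3^{k+1}) ≠ ∅}|^{1/2}. -/
open MeasureTheory Complex


noncomputable def ee (n : ℤ) (x : ℝ) : ℂ := Complex.exp (2 * Real.pi * Complex.I * n * x)

lemma ee_cont (n : ℤ) : Continuous (ee n) := by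
  unfold ee; fun_prop

lemma ee_mul (a b : ℤ) (x : ℝ) : ee a x * ee b x = ee (a + b) x := by
  unfold ee; rw [← Complex.exp_add]; congr 1; push_cast; ring

lemma ee_conj (a : ℤ) (x : ℝ) : (starRingEnd ℂ) (ee a x) = ee (-a) x := by
  unfold ee
  rw [← Complex.exp_conj]
  congr 1
  simp only [map_mul, Complex.conj_I, Complex.conj_ofReal, map_ofNat, map_intCast]
  push_cast
  ring

lemma ee_integral (n : ℤ) : ∫ x in (0:ℝ)..1, ee n x = if n = 0 then 1 else 0 := by
  unfold ee
  split_ifs with h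
  · simp [h]
  · have hc : (2 * (Real.pi:ℂ) * Complex.I * n) ≠ 0 := by
      simp [Real.pi_ne_zero, Complex.I_ne_zero, h]
    rw [integral_exp_mul_complex hc]
    have h1 : Complex.exp (2 * (Real.pi:ℂ) * Complex.I * n * ((1:ℝ):ℂ)) = 1 := by
      rw [show (2 * (Real.pi:ℂ) * Complex.I * n * ((1:ℝ):ℂ)) = n * (2 * Real.pi * Complex.I) by
        push_cast; ring]
      exact Complex.exp_int_mul_two_pi_mul_I n
    rw [h1]
    norm_num

lemma ee_integral' (n : ℤ) :
    ∫ x in Set.Ioc (0:ℝ) 1, ee n x = if n = 0 then 1 else 0 := by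
  rw [← intervalIntegral.integral_of_le zero_le_one]; exact ee_integral n

lemma ee_integrable (n : ℤ) : IntegrableOn (ee n) (Set.Ioc (0:ℝ) 1) := by
  exact (ee_cont n).integrableOn_Ioc

lemma ee_prod {ι : Type*} (T : Finset ι) (c : ι → ℤ) (x : ℝ) :
    ∏ i ∈ T, ee (c i) x = ee (∑ i ∈ T, c i) x := by
  classical
  induction T using Finset.induction with
  | empty => simp [ee]
  | insert _ _ h ih => rw [Finset.prod_insert h, Finset.sum_insert h, ih, ee_mul]

lemma sum_zero_of_pos {S : Finset ℕ} (hpos : ∀ x ∈ S, 0 < x) :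
    ∀ v : Multiset ℕ, (∀ x ∈ v, x ∈ S) → v.sum = 0 → v = 0 := by
  intro v hv hs
  rcases Multiset.empty_or_exists_mem v with h | ⟨x, hx⟩
  · exact h
  · have h1 : x ≤ v.sum := Multiset.single_le_sum (fun _ _ => Nat.zero_le _) x hx
    have h2 := hpos x (hv x hx)
    omega

lemma multiset_key (m : ℕ) (S : Finset ℕ) (hpos : ∀ x ∈ S, 0 < x)
    (hS : ∀ x ∈ S, ∀ y ∈ S, x < y → (m + 1) * x ≤ y) :
    ∀ n : ℕ, ∀ u v : Multiset ℕ, u.card ≤ n → u.card ≤ m → v.card ≤ m →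
      (∀ x ∈ u, x ∈ S) → (∀ x ∈ v, x ∈ S) → u.sum = v.sum → u = v := by
  intro n
  induction n with
  | zero =>
    intro u v hn _ _ _ hv hsum
    have hu0 : u = 0 := Multiset.card_eq_zero.mp (Nat.le_zero.mp hn)
    subst hu0
    simp only [Multiset.sum_zero] at hsum
    exact (sum_zero_of_pos hpos v hv hsum.symm).symm
  | succ n ih =>
    intro u v hn hum hvm hu hv hsum
    rcases Multiset.empty_or_exists_mem u with hu0 | ⟨a, ha⟩
    · subst hu0
      simp only [Multiset.sum_zero] at hsum
      exact (sum_zero_of_pos hpos v hv hsum.symm).symm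
    · have hune : u.toFinset.Nonempty := ⟨a, Multiset.mem_toFinset.mpr ha⟩
      have hvne : v ≠ 0 := by
        intro h
        subst h
        simp only [Multiset.sum_zero] at hsum
        have := sum_zero_of_pos hpos u hu hsum
        subst this
        exact absurd ha (Multiset.notMem_zero a)
      obtain ⟨b, hb⟩ := Multiset.exists_mem_of_ne_zero hvne
      have hvfne : v.toFinset.Nonempty := ⟨b, Multiset.mem_toFinset.mpr hb⟩
      set Mu := u.toFinset.max' hune with hMu_def
      set Mv := v.toFinset.max' hvfne with hMv_def
      have hMu_mem : Mu ∈ u := Multiset.mem_toFinset.mp (Finset.max'_mem _ _)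
      have hMv_mem : Mv ∈ v := Multiset.mem_toFinset.mp (Finset.max'_mem _ _)
      have hMu_top : ∀ x ∈ u, x ≤ Mu :=
        fun x hx => Finset.le_max' _ _ (Multiset.mem_toFinset.mpr hx)
      have hMv_top : ∀ x ∈ v, x ≤ Mv :=
        fun x hx => Finset.le_max' _ _ (Multiset.mem_toFinset.mpr hx)
      have key : ∀ (w z : Multiset ℕ), (∀ x ∈ w, x ∈ S) → (∀ x ∈ z, x ∈ S) →
          z.card ≤ m → ∀ M : ℕ, M ∈ w → M ∈ S → (∀ x ∈ z, x < M) → w.sum = z.sum → False := by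
        intro w z hw hz hzm M hMw hMS hlt hsz
        have h2 : (m + 1) * z.sum ≤ z.card * M := by
          calc (m + 1) * z.sum = (z.map (fun x => (m + 1) * x)).sum := by
                rw [Multiset.sum_map_mul_left]
                simp [Multiset.map_id']
            _ ≤ (z.map (fun _ => M)).sum := by
                apply Multiset.sum_map_le_sum_map
                intro x hx
                exact hS x (hz x hx) M hMS (hlt x hx)
            _ = z.card * M := by
                simp [Multiset.map_const', Multiset.sum_replicate, smul_eq_mul]
        have h3 : z.card * M ≤ m * M := Nat.mul_le_mul_right M hzm
        have hM0 : 0 < M := hpos M hMS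
        have h4 : z.sum < M := by nlinarith
        have h5 : M ≤ w.sum := Multiset.single_le_sum (fun _ _ => Nat.zero_le _) M hMw
        omega
      have heq : Mu = Mv := by
        rcases lt_trichotomy Mu Mv with h | h | h
        · exact absurd (key v u hv hu hum Mv hMv_mem (hv Mv hMv_mem)
            (fun x hx => lt_of_le_of_lt (hMu_top x hx) h) hsum.symm) not_false
        · exact h
        · exact absurd (key u v hu hv hvm Mu hMu_mem (hu Mu hMu_mem)
            (fun x hx => lt_of_le_of_lt (hMv_top x hx) h) hsum) not_false
      have hMv_mem' : Mu ∈ v := heq ▸ hMv_mem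
      have e1 : Mu ::ₘ u.erase Mu = u := Multiset.cons_erase hMu_mem
      have e2 : Mu ::ₘ v.erase Mu = v := Multiset.cons_erase hMv_mem'
      have hsum' : (u.erase Mu).sum = (v.erase Mu).sum := by
        have h := hsum
        rw [← e1, ← e2, Multiset.sum_cons, Multiset.sum_cons] at h
        omega
      have hcard : (u.erase Mu).card ≤ n := by
        rw [Multiset.card_erase_of_mem hMu_mem, Nat.pred_eq_sub_one]
        omega
      have h1m : (u.erase Mu).card ≤ m := le_trans (Multiset.card_erase_le) hum
      have h2m : (v.erase Mu).card ≤ m := le_trans (Multiset.card_erase_le) hvm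
      have hres := ih (u.erase Mu) (v.erase Mu) hcard h1m h2m
        (fun x hx => hu x (Multiset.mem_of_mem_erase hx))
        (fun x hx => hv x (Multiset.mem_of_mem_erase hx)) hsum'
      rw [← e1, ← e2, hres]

lemma tuple_key (m : ℕ) (S : Finset ℕ) (hpos : ∀ x ∈ S, 0 < x)
    (hS : ∀ x ∈ S, ∀ y ∈ S, x < y → (m + 1) * x ≤ y) (a b : Fin m → ℕ)
    (ha : ∀ i, a i ∈ S) (hb : ∀ i, b i ∈ S) (hsum : ∑ i, a i = ∑ i, b i) :
    ∀ j, ∃ i, b j = a i := by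
  have hcard : ∀ c : Fin m → ℕ, (Multiset.map c Finset.univ.val).card = m := by
    intro c; simp
  have hsum' : ∀ c : Fin m → ℕ, (Multiset.map c Finset.univ.val).sum = ∑ i, c i := fun c => rfl
  have hu : Multiset.map a Finset.univ.val = Multiset.map b Finset.univ.val := by
    apply multiset_key m S hpos hS m
    · exact le_of_eq (hcard a)
    · exact le_of_eq (hcard a)
    · exact le_of_eq (hcard b)
    · intro x hx
      obtain ⟨i, _, hi⟩ := Multiset.mem_map.mp hx
      exact hi ▸ ha i
    · intro x hx
      obtain ⟨i, _, hi⟩ := Multiset.mem_map.mp hx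
      exact hi ▸ hb i
    · rw [hsum', hsum', hsum]
  intro j
  have hj : b j ∈ Multiset.map a Finset.univ.val := by
    rw [hu]
    exact Multiset.mem_map.mpr ⟨j, by simp, rfl⟩
  obtain ⟨i, _, hi⟩ := Multiset.mem_map.mp hj
  exact ⟨i, hi.symm⟩

lemma sol_card_le (m : ℕ) (S : Finset ℕ) (hpos : ∀ x ∈ S, 0 < x)
    (hS : ∀ x ∈ S, ∀ y ∈ S, x < y → (m + 1) * x ≤ y) :
    (((Fintype.piFinset fun _ : Fin m => S) ×ˢ (Fintype.piFinset fun _ : Fin m => S)).filter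
      (fun ab => ∑ i, ab.1 i = ∑ i, ab.2 i)).card ≤ S.card ^ m * m ^ m := by
  classical
  set X := Fintype.piFinset fun _ : Fin m => S with hX
  set Sol := (X ×ˢ X).filter (fun ab => ∑ i, ab.1 i = ∑ i, ab.2 i) with hSol
  have hmap : ∀ ab ∈ Sol, ab.1 ∈ X :=
    fun ab h => (Finset.mem_product.mp (Finset.mem_filter.mp h).1).1
  rw [Finset.card_eq_sum_card_fiberwise hmap]
  have hfiber : ∀ a ∈ X, (Sol.filter fun ab => ab.1 = a).card ≤ m ^ m := by
    intro a haX
    have h1 : (Sol.filter fun ab => ab.1 = a).card ≤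
        (Fintype.piFinset fun _ : Fin m => Finset.image a Finset.univ).card := by
      apply Finset.card_le_card_of_injOn (fun ab => ab.2)
      · intro ab hab
        rw [Finset.mem_coe, Finset.mem_filter] at hab
        obtain ⟨habSol, habfst⟩ := hab
        rw [hSol, Finset.mem_filter, Finset.mem_product] at habSol
        obtain ⟨⟨h1X, h2X⟩, hs⟩ := habSol
        rw [Finset.mem_coe, Fintype.mem_piFinset]
        intro j
        rw [Finset.mem_image]
        have hkey := tuple_key m S hpos hS ab.1 ab.2
          (fun i => Fintype.mem_piFinset.mp h1X i) (fun i => Fintype.mem_piFinset.mp h2X i) hs j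
        obtain ⟨i, hi⟩ := hkey
        rw [habfst] at hi
        exact ⟨i, Finset.mem_univ i, hi.symm⟩
      · intro x hx y hy hxy
        rw [Finset.mem_coe, Finset.mem_filter] at hx hy
        exact Prod.ext (hx.2.trans hy.2.symm) hxy
    refine le_trans h1 ?_
    rw [Fintype.card_piFinset]
    calc ∏ _i : Fin m, (Finset.image a Finset.univ).card
        ≤ ∏ _i : Fin m, m := by
          apply Finset.prod_le_prod (fun _ _ => Nat.zero_le _)
          intro i _
          exact le_trans (Finset.card_image_le) (by simp)
      _ = m ^ m := by simp
  calc ∑ a ∈ X, (Sol.filter fun ab => ab.1 = a).card ≤ ∑ _a ∈ X, m ^ m :=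
        Finset.sum_le_sum hfiber
    _ = X.card * m ^ m := by rw [Finset.sum_const, smul_eq_mul]
    _ = S.card ^ m * m ^ m := by rw [hX, Fintype.card_piFinset]; simp



lemma int1 (A S : Finset ℕ) :
    ∫ x in Set.Ioc (0:ℝ) 1,
      ((∑ n ∈ A, ee n x) * (starRingEnd ℂ) (∑ n ∈ S, ee n x)) = ((A ∩ S).card : ℂ) := by
  classical
  have hpt : ∀ x : ℝ, (∑ n ∈ A, ee n x) * (starRingEnd ℂ) (∑ n ∈ S, ee n x)
      = ∑ n ∈ A, ∑ n' ∈ S, ee ((n : ℤ) - n') x := by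
    intro x
    rw [map_sum, Finset.sum_mul_sum]
    apply Finset.sum_congr rfl
    intro n _
    apply Finset.sum_congr rfl
    intro n' _
    rw [ee_conj, ee_mul]
    rfl
  simp_rw [hpt]
  rw [integral_finset_sum A (fun n _ => integrable_finset_sum S
    (fun n' _ => ee_integrable ((n:ℤ) - n')))]
  have : ∀ n ∈ A, (∫ x in Set.Ioc (0:ℝ) 1, ∑ n' ∈ S, ee ((n:ℤ) - n') x)
      = ∑ n' ∈ S, if n' = n then (1:ℂ) else 0 := by
    intro n _
    rw [integral_finset_sum S (fun n' _ => ee_integrable ((n:ℤ) - n'))]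
    apply Finset.sum_congr rfl
    intro n' _
    rw [ee_integral']
    congr 1
    simp [sub_eq_zero, eq_comm]
  rw [Finset.sum_congr rfl this]
  have : ∀ n ∈ A, (∑ n' ∈ S, if n' = n then (1:ℂ) else 0) = if n ∈ S then 1 else 0 := by
    intro n _
    rw [Finset.sum_ite_eq' S n (fun _ => (1:ℂ))]
  rw [Finset.sum_congr rfl this]
  rw [Finset.sum_ite_mem A S (fun _ => (1:ℂ))]
  simp

lemma int2 (S : Finset ℕ) (m : ℕ) :
    ∫ x in Set.Ioc (0:ℝ) 1,
      ((∑ n ∈ S, ee n x) ^ m * ((starRingEnd ℂ) (∑ n ∈ S, ee n x)) ^ m)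
      = ((((Fintype.piFinset fun _ : Fin m => S) ×ˢ (Fintype.piFinset fun _ : Fin m => S)).filter
          (fun ab => ∑ i, ab.1 i = ∑ i, ab.2 i)).card : ℂ) := by
  classical
  set X := Fintype.piFinset fun _ : Fin m => S with hX
  have hexp : ∀ (c : ℕ → ℤ) (x : ℝ), (∑ n ∈ S, ee (c n) x) ^ m
      = ∑ a ∈ X, ee (∑ i, c (a i)) x := by
    intro c x
    have h1 : (∑ n ∈ S, ee (c n) x) ^ m = ∏ _i : Fin m, (∑ n ∈ S, ee (c n) x) := by
      rw [Finset.prod_const, Finset.card_univ, Fintype.card_fin]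
    rw [h1, Finset.prod_univ_sum]
    apply Finset.sum_congr rfl
    intro a _
    exact ee_prod Finset.univ (fun i => c (a i)) x
  have hpt : ∀ x : ℝ, (∑ n ∈ S, ee n x) ^ m * ((starRingEnd ℂ) (∑ n ∈ S, ee n x)) ^ m
      = ∑ ab ∈ X ×ˢ X, ee ((∑ i, ((ab.1 i : ℤ))) - ∑ i, ((ab.2 i : ℤ))) x := by
    intro x
    have hconj : (starRingEnd ℂ) (∑ n ∈ S, ee n x) = ∑ n ∈ S, ee (-(n:ℤ)) x := by
      rw [map_sum]
      exact Finset.sum_congr rfl fun n _ => ee_conj n x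
    rw [hconj, hexp (fun n => (n:ℤ)) x, hexp (fun n => -(n:ℤ)) x, Finset.sum_mul_sum,
      Finset.sum_product]
    apply Finset.sum_congr rfl
    intro a _
    apply Finset.sum_congr rfl
    intro b _
    rw [ee_mul]
    congr 1
    simp [Finset.sum_neg_distrib, sub_eq_add_neg]
  simp_rw [hpt]
  rw [integral_finset_sum _ (fun ab _ => ee_integrable _)]
  have h2 : ∀ ab ∈ X ×ˢ X, (∫ x in Set.Ioc (0:ℝ) 1,
      ee ((∑ i, ((ab.1 i : ℤ))) - ∑ i, ((ab.2 i : ℤ))) x)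
      = if (∑ i, ab.1 i = ∑ i, ab.2 i) then (1:ℂ) else 0 := by
    intro ab _
    rw [ee_integral']
    congr 1
    rw [sub_eq_zero]
    simp only [eq_iff_iff]
    constructor
    · intro h; exact_mod_cast h
    · intro h; exact_mod_cast h
  rw [Finset.sum_congr rfl h2, Finset.sum_ite, Finset.sum_const, Finset.sum_const]
  simp



-- real moment identity
lemma int2' (S : Finset ℕ) (m : ℕ) :
    ∫ x in Set.Ioc (0:ℝ) 1, ‖∑ n ∈ S, ee n x‖ ^ (2 * m)
      = ((((Fintype.piFinset fun _ : Fin m => S) ×ˢ (Fintype.piFinset fun _ : Fin m => S)).filter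
          (fun ab => ∑ i, ab.1 i = ∑ i, ab.2 i)).card : ℝ) := by
  have hpt : ∀ z : ℂ, ((‖z‖ ^ (2 * m) : ℝ) : ℂ) = z ^ m * ((starRingEnd ℂ) z) ^ m := by
    intro z
    have h0 : (‖z‖ ^ (2 * m) : ℝ) = (Complex.normSq z) ^ m := by
      rw [pow_mul, Complex.sq_norm]
    rw [h0]
    push_cast
    rw [← Complex.mul_conj, mul_pow]
  have h := int2 S m
  rw [← integral_congr_ae (Filter.Eventually.of_forall fun x => (hpt (∑ n ∈ S, ee n x)))] at h
  have h2 : ((∫ x in Set.Ioc (0:ℝ) 1, ‖∑ n ∈ S, ee n x‖ ^ (2 * m) : ℝ) : ℂ)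
      = ∫ x in Set.Ioc (0:ℝ) 1, ((‖∑ n ∈ S, ee n x‖ ^ (2 * m) : ℝ) : ℂ) :=
    integral_ofReal.symm
  rw [← Complex.ofReal_inj, h2, h]
  push_cast
  ring

lemma ee_norm (n : ℤ) (x : ℝ) : ‖ee n x‖ = 1 := by
  unfold ee
  rw [Complex.norm_exp]
  norm_num [Complex.mul_re, Complex.mul_im]

lemma analytic {p : ℝ} (hp : 1 < p) {m : ℕ} (hm : 1 ≤ m)
    (hpm : p / (p - 1) < 2 * m) (A S : Finset ℕ) (hSA : S ⊆ A) (hSne : S.Nonempty)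
    (hsol : ((((Fintype.piFinset fun _ : Fin m => S) ×ˢ (Fintype.piFinset fun _ : Fin m => S)).filter
          (fun ab => ∑ i, ab.1 i = ∑ i, ab.2 i)).card) ≤ S.card ^ m * m ^ m) :
    Real.sqrt ((S.card : ℝ) / m) ≤ (∫ x in Set.Ioc (0:ℝ) 1, ‖∑ n ∈ A, ee n x‖ ^ p) ^ (1/p) := by
  classical
  set μ := (volume : Measure ℝ).restrict (Set.Ioc (0:ℝ) 1) with hμ
  haveI : IsProbabilityMeasure μ := by
    constructor
    rw [hμ, Measure.restrict_apply_univ, Real.volume_Ioc]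
    norm_num
  set F : ℝ → ℂ := fun x => ∑ n ∈ A, ee n x with hF
  set G : ℝ → ℂ := fun x => ∑ n ∈ S, ee n x with hG
  have hFc : Continuous F := continuous_finset_sum _ (fun n _ => ee_cont n)
  have hGc : Continuous G := continuous_finset_sum _ (fun n _ => ee_cont n)
  have hFb : ∀ x, ‖F x‖ ≤ (A.card : ℝ) := by
    intro x
    calc ‖F x‖ ≤ ∑ n ∈ A, ‖ee (n:ℤ) x‖ := norm_sum_le _ _
      _ = ∑ _n ∈ A, (1:ℝ) := Finset.sum_congr rfl (fun n _ => ee_norm (n:ℤ) x)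
      _ = (A.card : ℝ) := by simp
  have hGb : ∀ x, ‖G x‖ ≤ (S.card : ℝ) := by
    intro x
    calc ‖G x‖ ≤ ∑ n ∈ S, ‖ee (n:ℤ) x‖ := norm_sum_le _ _
      _ = ∑ _n ∈ S, (1:ℝ) := Finset.sum_congr rfl (fun n _ => ee_norm (n:ℤ) x)
      _ = (S.card : ℝ) := by simp
  have hMemF : ∀ q : ℝ, MemLp F (ENNReal.ofReal q) μ :=
    fun q => MemLp.of_bound hFc.aestronglyMeasurable _ (ae_of_all _ hFb)
  have hMemG : ∀ q : ℝ, MemLp G (ENNReal.ofReal q) μ :=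
    fun q => MemLp.of_bound hGc.aestronglyMeasurable _ (ae_of_all _ hGb)
  have hm' : (1:ℝ) ≤ (m:ℝ) := by exact_mod_cast hm
  set q₀ : ℝ := 2 * m with hq₀def
  have hq₀ : 1 < q₀ := by rw [hq₀def]; linarith
  set p₀ : ℝ := q₀ / (q₀ - 1) with hp₀def
  have hpq : p₀.HolderConjugate q₀ := (Real.HolderConjugate.conjExponent hq₀).symm
  have hp₀pos : 0 < p₀ := hpq.pos
  set s : ℝ := (S.card : ℝ) with hs
  have hs1 : 1 ≤ s := by
    rw [hs]; exact_mod_cast Finset.card_pos.mpr hSne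
  -- Step 1 : s ≤ ∫ ‖F‖ ‖G‖
  have step1 : s ≤ ∫ x, ‖F x‖ * ‖G x‖ ∂μ := by
    have e1 : ∫ x, F x * (starRingEnd ℂ) (G x) ∂μ = (s : ℂ) := by
      rw [hμ]
      have := int1 A S
      rw [Finset.inter_eq_right.mpr hSA] at this
      exact_mod_cast this
    have e2 : s = ‖∫ x, F x * (starRingEnd ℂ) (G x) ∂μ‖ := by
      rw [e1, Complex.norm_real]
      exact (Real.norm_of_nonneg (by linarith)).symm
    rw [e2]
    refine le_trans (norm_integral_le_integral_norm _) (le_of_eq ?_)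
    apply integral_congr_ae
    apply Filter.Eventually.of_forall
    intro x
    show ‖F x * (starRingEnd ℂ) (G x)‖ = ‖F x‖ * ‖G x‖
    rw [norm_mul, RCLike.norm_conj]
  -- Step 2 : Hölder
  have step2 : ∫ x, ‖F x‖ * ‖G x‖ ∂μ ≤
      (∫ x, ‖F x‖ ^ p₀ ∂μ) ^ (1/p₀) * (∫ x, ‖G x‖ ^ q₀ ∂μ) ^ (1/q₀) :=
    integral_mul_norm_le_Lp_mul_Lq hpq (hMemF p₀) (hMemG q₀)
  -- Step 3 : moment bound for G
  have step3 : (∫ x, ‖G x‖ ^ q₀ ∂μ) ^ (1/q₀) ≤ Real.sqrt (s * m) := by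
    have e3 : ∫ x, ‖G x‖ ^ q₀ ∂μ = ∫ x, ‖G x‖ ^ (2 * m : ℕ) ∂μ := by
      apply integral_congr_ae
      apply Filter.Eventually.of_forall
      intro x
      show ‖G x‖ ^ q₀ = ‖G x‖ ^ (2 * m : ℕ)
      rw [show q₀ = ((2 * m : ℕ) : ℝ) by rw [hq₀def]; push_cast; ring, Real.rpow_natCast]
    have e4 : ∫ x, ‖G x‖ ^ (2 * m : ℕ) ∂μ ≤ s ^ m * (m:ℝ) ^ m := by
      rw [hμ, hG]
      rw [int2' S m]
      calc _ ≤ ((S.card ^ m * m ^ m : ℕ) : ℝ) := by exact_mod_cast hsol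
        _ = s ^ m * (m:ℝ) ^ m := by push_cast; ring
    have e5 : s ^ m * (m:ℝ) ^ m = (s * m) ^ m := (mul_pow _ _ _).symm
    have hsm : (0:ℝ) ≤ s * m := by positivity
    have e6 : ((s * m) ^ m) ^ (1/q₀) = Real.sqrt (s * m) := by
      rw [← Real.rpow_natCast (s * m) m, ← Real.rpow_mul hsm]
      rw [Real.sqrt_eq_rpow]
      congr 1
      rw [hq₀def]
      have : (m:ℝ) ≠ 0 := by linarith
      field_simp
    rw [e3]
    calc (∫ x, ‖G x‖ ^ (2 * m : ℕ) ∂μ) ^ (1/q₀) ≤ ((s * m) ^ m) ^ (1/q₀) := by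
          apply Real.rpow_le_rpow _ (by rw [← e5]; exact e4) (by positivity)
          apply integral_nonneg
          intro x
          positivity
      _ = Real.sqrt (s * m) := e6
  -- Step 4 : monotonicity of Lp norms
  have intFp_nonneg : 0 ≤ ∫ x, ‖F x‖ ^ p ∂μ :=
    integral_nonneg (fun x => Real.rpow_nonneg (norm_nonneg _) _)
  have step4 : (∫ x, ‖F x‖ ^ p₀ ∂μ) ^ (1/p₀) ≤ (∫ x, ‖F x‖ ^ p ∂μ) ^ (1/p) := by
    have hp₀p : p₀ < p := by
      rw [hp₀def, div_lt_iff₀ (by linarith : (0:ℝ) < q₀ - 1)]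
      have h' : p < q₀ * (p - 1) := by
        rw [div_lt_iff₀ (by linarith : (0:ℝ) < p - 1)] at hpm
        linarith
      nlinarith
    set t : ℝ := p / p₀ with ht_def
    have ht : 1 < t := (one_lt_div hp₀pos).mpr hp₀p
    have hpt : p₀ * t = p := by
      rw [ht_def]; field_simp
    have ht' : t.HolderConjugate (t / (t - 1)) := Real.HolderConjugate.conjExponent ht
    have hmemf : MemLp (fun x => ‖F x‖ ^ p₀) (ENNReal.ofReal t) μ := by
      apply MemLp.of_bound
        ((hFc.norm.rpow_const (fun x => Or.inr hp₀pos.le)).aestronglyMeasurable)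
        (((A.card : ℝ) + 1) ^ p₀)
      apply ae_of_all
      intro x
      rw [Real.norm_of_nonneg (Real.rpow_nonneg (norm_nonneg _) _)]
      apply Real.rpow_le_rpow (norm_nonneg _) _ hp₀pos.le
      have := hFb x
      linarith
    have h4 := integral_mul_le_Lp_mul_Lq_of_nonneg ht'
      (ae_of_all μ (fun x => Real.rpow_nonneg (norm_nonneg (F x)) p₀))
      (ae_of_all μ (fun _ => zero_le_one)) hmemf (memLp_const (1:ℝ))
    simp only [mul_one] at h4
    have e7 : ∫ x, ((fun x => ‖F x‖ ^ p₀) x) ^ t ∂μ = ∫ x, ‖F x‖ ^ p ∂μ := by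
      apply integral_congr_ae
      apply Filter.Eventually.of_forall
      intro x
      show (‖F x‖ ^ p₀) ^ t = ‖F x‖ ^ p
      rw [← Real.rpow_mul (norm_nonneg _), hpt]
    have e8 : ∫ _x, (1:ℝ) ^ (t / (t-1)) ∂μ = 1 := by
      simp [Real.one_rpow]
    rw [e7, e8] at h4
    rw [Real.one_rpow, mul_one] at h4
    calc (∫ x, ‖F x‖ ^ p₀ ∂μ) ^ (1/p₀)
        ≤ (((∫ x, ‖F x‖ ^ p ∂μ) ^ (1/t)) : ℝ) ^ (1/p₀) := by
          apply Real.rpow_le_rpow _ h4 (by positivity)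
          exact integral_nonneg (fun x => Real.rpow_nonneg (norm_nonneg _) _)
      _ = (∫ x, ‖F x‖ ^ p ∂μ) ^ (1/p) := by
          rw [← Real.rpow_mul intFp_nonneg]
          congr 1
          rw [← hpt]
          field_simp
  -- Combine
  set L : ℝ := (∫ x, ‖F x‖ ^ p ∂μ) ^ (1/p) with hL
  have hcomb : s ≤ L * Real.sqrt (s * m) := by
    calc s ≤ ∫ x, ‖F x‖ * ‖G x‖ ∂μ := step1
      _ ≤ (∫ x, ‖F x‖ ^ p₀ ∂μ) ^ (1/p₀) * (∫ x, ‖G x‖ ^ q₀ ∂μ) ^ (1/q₀) := step2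
      _ ≤ L * Real.sqrt (s * m) := by
          apply mul_le_mul step4 step3 (by positivity) (by rw [hL]; positivity)
  have hsm_pos : 0 < Real.sqrt (s * m) := Real.sqrt_pos.mpr (by nlinarith)
  have hdiv : Real.sqrt (s / m) = s / Real.sqrt (s * m) := by
    rw [eq_div_iff hsm_pos.ne']
    rw [← Real.sqrt_mul (by positivity)]
    rw [show s / m * (s * m) = s ^ 2 by field_simp]
    exact Real.sqrt_sq (by linarith)
  rw [hμ] at hL
  rw [hdiv, div_le_iff₀ hsm_pos]
  exact hcomb



/-- For every `p ∈ (1,∞)` there is `C_p > 0` such that for every nonempty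
finite set `A` of positive integers,
`(∫_0^1 |Σ_{n∈A} e(nx)|^p dx)^{1/p} ≥ C_p · |{k ≥ 0 : A ∩ [3^k, 3^{k+1}) ≠ ∅}|^{1/2}`. -/
theorem stmt12 :
    ∀ p : ℝ, 1 < p → ∃ C : ℝ, 0 < C ∧
      ∀ A : Finset ℕ, A.Nonempty → (∀ n ∈ A, 0 < n) →
        (∫ x in (0:ℝ)..1,
            (‖∑ n ∈ A, Complex.exp (2 * Real.pi * Complex.I * n * x)‖) ^ p)
              ^ (1 / p)
          ≥ C * Real.sqrt ({k : ℕ | ∃ n ∈ A, 3 ^ k ≤ n ∧ n < 3 ^ (k + 1)}.ncard) := by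
  intro p hp
  classical
  set m : ℕ := ⌈p / (p - 1)⌉₊ + 1 with hm_def
  have hm : 1 ≤ m := by omega
  have hmR : (1:ℝ) ≤ (m:ℝ) := by exact_mod_cast hm
  set r : ℕ := m + 1 with hr_def
  refine ⟨(Real.sqrt ((m:ℝ) * ((m:ℝ) + 1)))⁻¹, by positivity, ?_⟩
  intro A hA hApos
  -- the block set equals the image of `Nat.log 3`
  set K : Finset ℕ := A.image (Nat.log 3) with hK
  have hsetK : {k : ℕ | ∃ n ∈ A, 3 ^ k ≤ n ∧ n < 3 ^ (k + 1)} = ↑K := by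
    ext k
    simp only [Set.mem_setOf_eq, hK, Finset.coe_image, Set.mem_image, Finset.mem_coe]
    constructor
    · rintro ⟨n, hn, h1, h2⟩
      refine ⟨n, hn, ?_⟩
      exact (Nat.log_eq_iff (Or.inr ⟨by norm_num, (hApos n hn).ne'⟩)).mpr ⟨h1, h2⟩
    · rintro ⟨n, hn, hk⟩
      obtain ⟨h1, h2⟩ := (Nat.log_eq_iff (Or.inr ⟨by norm_num, (hApos n hn).ne'⟩)).mp hk
      exact ⟨n, hn, h1, h2⟩
  have hKcard : ({k : ℕ | ∃ n ∈ A, 3 ^ k ≤ n ∧ n < 3 ^ (k + 1)}.ncard : ℝ) = (K.card : ℝ) := by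
    rw [hsetK, Set.ncard_coe_finset]
  have hKne : K.Nonempty := hA.image _
  have hB1 : 1 ≤ K.card := Finset.card_pos.mpr hKne
  -- pigeonhole: a residue class mod r capturing at least 1/r of the blocks
  have hfib : K.card = ∑ j ∈ Finset.range r, (K.filter (fun k => k % r = j)).card :=
    Finset.card_eq_sum_card_fiberwise (fun k _ => Finset.mem_range.mpr (Nat.mod_lt _ (by omega)))
  obtain ⟨j, hj⟩ : ∃ j : ℕ, K.card ≤ r * (K.filter (fun k => k % r = j)).card := by
    by_contra hcon
    push_neg at hcon
    have h1 : r * K.card = ∑ j ∈ Finset.range r, r * (K.filter (fun k => k % r = j)).card := by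
      rw [hfib, Finset.mul_sum]
    have h2 : ∑ j ∈ Finset.range r, r * (K.filter (fun k => k % r = j)).card
        ≤ ∑ _j ∈ Finset.range r, (K.card - 1) :=
      Finset.sum_le_sum (fun j _ => by have := hcon j; omega)
    rw [Finset.sum_const, Finset.card_range, smul_eq_mul] at h2
    have h3 : r * K.card ≤ r * (K.card - 1) := h1 ▸ h2
    have h5 : r * (K.card - 1) < r * K.card :=
      mul_lt_mul_of_pos_left (by omega) (by omega)
    exact absurd (lt_of_le_of_lt h3 h5) (lt_irrefl _)
  set Kj : Finset ℕ := K.filter (fun k => k % r = j) with hKj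
  have hKjne : Kj.Nonempty := by
    rcases Nat.eq_zero_or_pos Kj.card with h | h
    · rw [h, Nat.mul_zero] at hj; omega
    · exact Finset.card_pos.mp h
  -- representatives
  have hrep : ∀ k : ℕ, ∃ n : ℕ, k ∈ K → (n ∈ A ∧ Nat.log 3 n = k) := by
    intro k
    by_cases hk : k ∈ K
    · rw [hK, Finset.mem_image] at hk
      obtain ⟨n, hn, hnk⟩ := hk
      exact ⟨n, fun _ => ⟨hn, hnk⟩⟩
    · exact ⟨0, fun h => absurd h hk⟩
  choose rep hrep' using hrep
  set S : Finset ℕ := Kj.image rep with hS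
  have hKjK : Kj ⊆ K := Finset.filter_subset _ _
  have hSA : S ⊆ A := by
    intro n hn
    rw [hS, Finset.mem_image] at hn
    obtain ⟨k, hk, hkn⟩ := hn
    exact hkn ▸ (hrep' k (hKjK hk)).1
  have hlog : ∀ k ∈ Kj, Nat.log 3 (rep k) = k := fun k hk => (hrep' k (hKjK hk)).2
  have hinj : Set.InjOn rep ↑Kj := fun k hk k' hk' h => by
    rw [← hlog k (Finset.mem_coe.mp hk), h, hlog k' (Finset.mem_coe.mp hk')]
  have hScard : S.card = Kj.card := Finset.card_image_of_injOn hinj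
  have hSne : S.Nonempty := hKjne.image _
  have hSpos : ∀ x ∈ S, 0 < x := fun x hx => hApos x (hSA hx)
  -- lacunarity
  have hlac : ∀ x ∈ S, ∀ y ∈ S, x < y → (m + 1) * x ≤ y := by
    intro x hx y hy hxy
    rw [hS, Finset.mem_image] at hx hy
    obtain ⟨k, hk, rfl⟩ := hx
    obtain ⟨k', hk', rfl⟩ := hy
    have hxpos : 0 < rep k := hApos _ ((hrep' k (hKjK hk)).1)
    have hypos : 0 < rep k' := hApos _ ((hrep' k' (hKjK hk')).1)
    have hx1 : 3 ^ k ≤ rep k := by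
      have := Nat.pow_log_le_self 3 hxpos.ne'
      rwa [hlog k hk] at this
    have hx2 : rep k < 3 ^ (k + 1) := by
      have := Nat.lt_pow_succ_log_self (by norm_num : 1 < 3) (rep k)
      rwa [hlog k hk] at this
    have hy1 : 3 ^ k' ≤ rep k' := by
      have := Nat.pow_log_le_self 3 hypos.ne'
      rwa [hlog k' hk'] at this
    have hy2 : rep k' < 3 ^ (k' + 1) := by
      have := Nat.lt_pow_succ_log_self (by norm_num : 1 < 3) (rep k')
      rwa [hlog k' hk'] at this
    have hkk' : k < k' := by
      rcases lt_trichotomy k k' with h | h | h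
      · exact h
      · exact absurd (h ▸ rfl : rep k = rep k') (by omega)
      · -- k' < k : contradiction with x < y
        have : 3 ^ (k' + 1) ≤ 3 ^ k := Nat.pow_le_pow_right (by norm_num) (by omega)
        omega
    have hmodk : k % r = j := (Finset.mem_filter.mp hk).2
    have hmodk' : k' % r = j := (Finset.mem_filter.mp hk').2
    have hdvd : r ∣ (k' - k) :=
      Nat.dvd_of_mod_eq_zero (Nat.sub_mod_eq_zero_of_mod_eq (hmodk'.trans hmodk.symm))
    have hrk : k + r ≤ k' := by
      have := Nat.le_of_dvd (by omega) hdvd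
      omega
    have hmp : m + 1 ≤ 3 ^ m := Nat.lt_pow_self (n := m) (by norm_num)
    apply le_of_lt
    calc (m + 1) * rep k ≤ 3 ^ m * rep k := Nat.mul_le_mul_right _ hmp
      _ < 3 ^ m * 3 ^ (k + 1) := mul_lt_mul_of_pos_left hx2 (by positivity)
      _ = 3 ^ (m + (k + 1)) := (pow_add 3 m (k+1)).symm
      _ ≤ 3 ^ k' := Nat.pow_le_pow_right (by norm_num) (by omega)
      _ ≤ rep k' := hy1
  have hsol := sol_card_le m S hSpos hlac
  have hpm : p / (p - 1) < 2 * (m:ℝ) := by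
    have h1 : p / (p - 1) ≤ (⌈p / (p - 1)⌉₊ : ℝ) := Nat.le_ceil _
    have h2 : ((⌈p / (p - 1)⌉₊ : ℕ) : ℝ) < 2 * (m:ℝ) := by
      rw [hm_def]
      push_cast
      have h0 : (0:ℝ) ≤ (⌈p / (p - 1)⌉₊ : ℝ) := Nat.cast_nonneg _
      linarith
    linarith
  have hana := analytic hp hm hpm A S hSA hSne hsol
  -- rewrite the goal
  rw [ge_iff_le]
  have hFeq : ∀ x : ℝ, ((‖∑ n ∈ A, Complex.exp (2 * Real.pi * Complex.I * n * x)‖) ^ p : ℝ)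
      = ‖∑ n ∈ A, ee n x‖ ^ p := by
    intro x
    congr 2
  have hIeq : (∫ x in (0:ℝ)..1,
      (‖∑ n ∈ A, Complex.exp (2 * Real.pi * Complex.I * n * x)‖) ^ p)
      = ∫ x in Set.Ioc (0:ℝ) 1, ‖∑ n ∈ A, ee n x‖ ^ p := by
    rw [intervalIntegral.integral_of_le zero_le_one]
    apply integral_congr_ae
    exact Filter.Eventually.of_forall (fun x => hFeq x)
  rw [hIeq, hKcard]
  refine le_trans ?_ hana
  -- final arithmetic
  have hb_le : (K.card : ℝ) ≤ ((m:ℝ) + 1) * (S.card : ℝ) := by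
    rw [hScard]
    have hj' : K.card ≤ (m + 1) * Kj.card := hj
    exact_mod_cast hj'
  have hs_pos : (0:ℝ) < (S.card : ℝ) := by
    exact_mod_cast Finset.card_pos.mpr hSne
  have hmm : (0:ℝ) < (m:ℝ) * ((m:ℝ) + 1) := by positivity
  have key : (K.card:ℝ) / ((m:ℝ) * ((m:ℝ) + 1)) ≤ (S.card:ℝ) / (m:ℝ) := by
    rw [div_le_div_iff₀ hmm (by linarith)]
    nlinarith [hb_le, hs_pos, hmR]
  calc (Real.sqrt ((m:ℝ) * ((m:ℝ) + 1)))⁻¹ * Real.sqrt (K.card)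
      = Real.sqrt (K.card) / Real.sqrt ((m:ℝ) * ((m:ℝ) + 1)) := inv_mul_eq_div _ _
    _ = Real.sqrt ((K.card:ℝ) / ((m:ℝ) * ((m:ℝ) + 1))) :=
        (Real.sqrt_div (Nat.cast_nonneg _) _).symm
    _ ≤ Real.sqrt ((S.card : ℝ) / (m:ℝ)) := Real.sqrt_le_sqrt key
end

section
/- Let Ω be a Lebesgue-measurable subset of ℝ/ℤ that is sum-free, i.e., there do not exist x, y, z ∈ Ω with x + y = z in ℝ/ℤ. Then the Haar (Lebesgue) measure of Ω is at most 1/3. -/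
open Set Metric MeasureTheory Pointwise
open scoped ENNReal NNReal

namespace Stmt13Aux

local notation "𝕋" => AddCircle (1 : ℝ)

lemma norm_coe_le_abs (x : ℝ) : ‖(x : 𝕋)‖ ≤ |x| := by
  rw [AddCircle.norm_eq]
  simp only [inv_one, one_mul, mul_one]
  rcases le_or_gt (1 / 2) |x| with h | h
  · exact (abs_sub_round x).trans h
  · have hr : round x = 0 := by
      rw [round_eq_zero_iff]
      constructor
      · linarith [neg_abs_le x]
      · linarith [le_abs_self x]
    simp [hr]

set_option maxHeartbeats 1000000 in
/-- The key lemma: a compact sum-free subset of the circle has measure at most `1/3 + ε`. -/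
lemma compact_bound (K : Set 𝕋) (hK : IsCompact K)
    (hsf : ∀ x ∈ K, ∀ y ∈ K, x + y ∉ K) {ε : ℝ} (hε : 0 < ε) :
    volume K ≤ ENNReal.ofReal (1 / 3 + ε) := by
  rcases K.eq_empty_or_nonempty with rfl | hKne
  · simp
  -- the sumset is compact and disjoint from K
  have hS : IsCompact (K + K) := hK.add hK
  have hdisj : K ⊆ (K + K)ᶜ := by
    intro z hz hz'
    obtain ⟨x, hx, y, hy, hxy⟩ := Set.mem_add.1 hz'
    exact hsf x hx y hy (hxy ▸ hz)
  obtain ⟨δ, hδ, hthick⟩ :=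
    hK.exists_thickening_subset_open hS.isClosed.isOpen_compl hdisj
  -- choose a large prime p
  obtain ⟨p, hpN, hp⟩ :=
    Nat.exists_infinite_primes (max (⌈3 / δ⌉₊ + 1) (⌈1 / ε⌉₊ + 1))
  haveI : Fact p.Prime := ⟨hp⟩
  have hp0 : (0 : ℝ) < p := by exact_mod_cast hp.pos
  have hpinv0 : (0 : ℝ) < (p : ℝ)⁻¹ := inv_pos.2 hp0
  have hinvmul : (p : ℝ)⁻¹ * (p : ℝ) = 1 := inv_mul_cancel₀ hp0.ne'
  have hp3δ : 3 / δ < (p : ℝ) := by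
    have h1 : (⌈3 / δ⌉₊ + 1 : ℕ) ≤ p := le_trans (le_max_left _ _) hpN
    have h2 : (3 / δ : ℝ) ≤ (⌈3 / δ⌉₊ : ℝ) := Nat.le_ceil _
    have h3 : ((⌈3 / δ⌉₊ : ℕ) : ℝ) + 1 ≤ (p : ℝ) := by exact_mod_cast h1
    linarith
  have hpε : 1 / ε < (p : ℝ) := by
    have h1 : (⌈1 / ε⌉₊ + 1 : ℕ) ≤ p := le_trans (le_max_right _ _) hpN
    have h2 : (1 / ε : ℝ) ≤ (⌈1 / ε⌉₊ : ℝ) := Nat.le_ceil _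
    have h3 : ((⌈1 / ε⌉₊ : ℕ) : ℝ) + 1 ≤ (p : ℝ) := by exact_mod_cast h1
    linarith
  -- the embedding of ZMod p into the circle
  set ξ : 𝕋 := (((p : ℝ)⁻¹ : ℝ) : 𝕋) with hξ
  have hfp : (zmultiplesHom 𝕋 ξ) (p : ℤ) = 0 := by
    show (p : ℤ) • ξ = 0
    rw [hξ, ← AddCircle.coe_zsmul]
    have h1 : ((p : ℤ) • ((p : ℝ)⁻¹ : ℝ) : ℝ) = 1 := by
      rw [zsmul_eq_mul]
      push_cast
      field_simp
    rw [h1]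
    exact AddCircle.coe_period (1 : ℝ)
  set emb : ZMod p →+ 𝕋 := ZMod.lift p ⟨zmultiplesHom 𝕋 ξ, hfp⟩ with hemb
  have hemb_coe : ∀ n : ℤ, emb ((n : ZMod p)) = (((n : ℝ) * (p : ℝ)⁻¹ : ℝ) : 𝕋) := by
    intro n
    rw [hemb, ZMod.lift_coe]
    show n • ξ = _
    rw [hξ, ← AddCircle.coe_zsmul]
    congr 1
    rw [zsmul_eq_mul]
  -- the discretization map
  set t : 𝕋 → ℝ := fun x => ((AddCircle.equivIco 1 0 x : Ico (0 : ℝ) (0 + 1)) : ℝ) with hT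
  have ht_mem : ∀ x : 𝕋, t x ∈ Ico (0 : ℝ) 1 := by
    intro x
    have := (AddCircle.equivIco 1 0 x).2
    simpa using this
  have ht_coe : ∀ x : 𝕋, ((t x : ℝ) : 𝕋) = x := fun x =>
    (AddCircle.equivIco 1 0).symm_apply_apply x
  set φ : 𝕋 → ZMod p := fun x => ((⌊(p : ℝ) * t x⌋ : ℤ) : ZMod p) with hφ
  -- frame: each point is an embedded lattice point plus a small error
  have hframe : ∀ x : 𝕋, ∃ r : ℝ, 0 ≤ r ∧ r < (p : ℝ)⁻¹ ∧ x = emb (φ x) + ((r : ℝ) : 𝕋) := by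
    intro x
    refine ⟨t x - (⌊(p : ℝ) * t x⌋ : ℝ) * (p : ℝ)⁻¹, ?_, ?_, ?_⟩
    · have h1 := Int.floor_le ((p : ℝ) * t x)
      rw [sub_nonneg]
      calc (⌊(p : ℝ) * t x⌋ : ℝ) * (p : ℝ)⁻¹ ≤ ((p : ℝ) * t x) * (p : ℝ)⁻¹ :=
            mul_le_mul_of_nonneg_right h1 hpinv0.le
        _ = t x := by field_simp
    · have h2 := Int.lt_floor_add_one ((p : ℝ) * t x)
      have h4 : (p : ℝ)⁻¹ * ((p : ℝ) * t x) = t x := by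
        field_simp
      have h5 : (p : ℝ)⁻¹ * ((⌊(p : ℝ) * t x⌋ : ℝ) + 1)
          = (⌊(p : ℝ) * t x⌋ : ℝ) * (p : ℝ)⁻¹ + (p : ℝ)⁻¹ := by ring
      linarith [mul_lt_mul_of_pos_left h2 hpinv0]
    · rw [hφ, hemb_coe, ← AddCircle.coe_add]
      conv_lhs => rw [← ht_coe x]
      congr 1
      ring
  -- the discretized set
  set A : Finset (ZMod p) := (Set.toFinite (φ '' K)).toFinset with hA
  have hmemA : ∀ i, i ∈ A ↔ ∃ x ∈ K, φ x = i := by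
    intro i; rw [hA, Set.Finite.mem_toFinset]; exact Set.mem_image _ _ _
  -- A is nonempty
  have hAne : A.Nonempty := by
    obtain ⟨x, hx⟩ := hKne
    exact ⟨φ x, (hmemA _).2 ⟨x, hx, rfl⟩⟩
  -- A is sum-free
  have hAsf : Disjoint A (A + A) := by
    rw [Finset.disjoint_left]
    intro i hi hi'
    obtain ⟨a, ha, b, hb, hab⟩ := Finset.mem_add.1 hi'
    obtain ⟨x, hx, hxa⟩ := (hmemA a).1 ha
    obtain ⟨y, hy, hyb⟩ := (hmemA b).1 hb
    obtain ⟨z, hz, hzi⟩ := (hmemA i).1 hi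
    obtain ⟨r1, hr10, hr11, hr1⟩ := hframe x
    obtain ⟨r2, hr20, hr21, hr2⟩ := hframe y
    obtain ⟨r3, hr30, hr31, hr3⟩ := hframe z
    rw [hxa] at hr1
    rw [hyb] at hr2
    rw [hzi] at hr3
    have hxyS : x + y ∈ K + K := Set.add_mem_add hx hy
    have hdist : dist (x + y) z < δ := by
      have hxy : x + y - z = (((r1 + r2 - r3 : ℝ)) : 𝕋) := by
        rw [hr1, hr2, hr3, ← hab, map_add, AddCircle.coe_sub, AddCircle.coe_add]
        abel
      rw [dist_eq_norm, hxy]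
      calc ‖(((r1 + r2 - r3 : ℝ)) : 𝕋)‖ ≤ |r1 + r2 - r3| := norm_coe_le_abs _
        _ < 3 * (p : ℝ)⁻¹ := by
            rw [abs_lt]
            constructor <;> linarith
        _ < δ := by
            rw [div_lt_iff₀ hδ] at hp3δ
            nlinarith [mul_lt_mul_of_pos_left hp3δ hpinv0]
    have hmem : x + y ∈ thickening δ K := by
      rw [mem_thickening_iff]
      exact ⟨z, hz, hdist⟩
    exact (hthick hmem) hxyS
  -- Cauchy-Davenport gives the cardinality bound
  have hcard : 3 * A.card ≤ p + 1 := by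
    have hCD := ZMod.cauchy_davenport hp hAne hAne
    have hsub : A.card + (A + A).card ≤ p := by
      have h := Finset.card_le_univ (A ∪ (A + A))
      rwa [Finset.card_union_of_disjoint hAsf, ZMod.card] at h
    have hA1 : 1 ≤ A.card := Finset.card_pos.2 hAne
    rcases min_cases p (A.card + A.card - 1) with ⟨h1, h2⟩ | ⟨h1, h2⟩ <;>
      rw [h1] at hCD <;> omega
  -- the measure bound via covering by small balls
  have hple : (p : ℝ)⁻¹ ≤ 1 := by
    rw [inv_le_one_iff₀]
    right
    exact_mod_cast hp.one_lt.le
  have h2p : (2 * (p : ℝ))⁻¹ = (p : ℝ)⁻¹ / 2 := by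
    rw [mul_inv]; ring
  have hcover : K ⊆ ⋃ i ∈ A, closedBall (emb i + (((2 * (p : ℝ))⁻¹ : ℝ) : 𝕋)) (2 * (p : ℝ))⁻¹ := by
    intro x hx
    refine Set.mem_biUnion ((hmemA (φ x)).2 ⟨x, hx, rfl⟩) ?_
    obtain ⟨r, hr0, hr1, hr⟩ := hframe x
    rw [mem_closedBall, dist_eq_norm]
    nth_rewrite 1 [hr]
    have heq : emb (φ x) + ((r : ℝ) : 𝕋) - (emb (φ x) + (((2 * (p : ℝ))⁻¹ : ℝ) : 𝕋))
        = (((r - (2 * (p : ℝ))⁻¹ : ℝ)) : 𝕋) := by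
      rw [AddCircle.coe_sub]; abel
    rw [heq]
    calc ‖(((r - (2 * (p : ℝ))⁻¹ : ℝ)) : 𝕋)‖ ≤ |r - (2 * (p : ℝ))⁻¹| := norm_coe_le_abs _
      _ ≤ (2 * (p : ℝ))⁻¹ := by
          rw [abs_le]
          exact ⟨by linarith, by linarith⟩
  have hμK : volume K ≤ (A.card : ℝ≥0∞) * ENNReal.ofReal ((p : ℝ)⁻¹) := by
    calc volume K ≤ ∑ i ∈ A, volume (closedBall (emb i + (((2 * (p : ℝ))⁻¹ : ℝ) : 𝕋))
        ((2 * (p : ℝ))⁻¹)) := le_trans (measure_mono hcover) (measure_biUnion_finset_le _ _)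
      _ = ∑ i ∈ A, ENNReal.ofReal ((p : ℝ)⁻¹) := by
          refine Finset.sum_congr rfl fun i _ => ?_
          rw [AddCircle.volume_closedBall]
          congr 1
          have h22 : 2 * (2 * (p : ℝ))⁻¹ = (p : ℝ)⁻¹ := by
            rw [h2p]; ring
          rw [h22, min_eq_right hple]
      _ = (A.card : ℝ≥0∞) * ENNReal.ofReal ((p : ℝ)⁻¹) := by
          rw [Finset.sum_const, nsmul_eq_mul]
  -- conclude
  calc volume K ≤ (A.card : ℝ≥0∞) * ENNReal.ofReal ((p : ℝ)⁻¹) := hμK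
    _ = ENNReal.ofReal ((A.card : ℝ) * (p : ℝ)⁻¹) := by
        rw [ENNReal.ofReal_mul (by positivity)]
        simp
    _ ≤ ENNReal.ofReal (1 / 3 + ε) := by
        apply ENNReal.ofReal_le_ofReal
        have hAc : (A.card : ℝ) ≤ ((p : ℝ) + 1) / 3 := by
          have h : (3 * A.card : ℝ) ≤ (p : ℝ) + 1 := by exact_mod_cast hcard
          linarith
        have h1 : (A.card : ℝ) * (p : ℝ)⁻¹ ≤ ((p : ℝ) + 1) / 3 * (p : ℝ)⁻¹ :=
          mul_le_mul_of_nonneg_right hAc hpinv0.le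
        have h2 : ((p : ℝ) + 1) / 3 * (p : ℝ)⁻¹ = 1 / 3 + 1 / (3 * (p : ℝ)) := by
          field_simp
        have h3 : 1 / (3 * (p : ℝ)) ≤ ε := by
          rw [div_le_iff₀ (by positivity)]
          rw [div_lt_iff₀ hε] at hpε
          nlinarith
        linarith

end Stmt13Aux

/-- A Lebesgue-measurable sum-free subset of `ℝ/ℤ` has Haar measure at
most `1/3`. -/
theorem stmt13 (Ω : Set (AddCircle (1 : ℝ))) (hmeas : MeasurableSet Ω)
    (hsf : ¬ ∃ x ∈ Ω, ∃ y ∈ Ω, ∃ z ∈ Ω, x + y = z) :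
    MeasureTheory.volume Ω ≤ 1/3 := by
  push_neg at hsf
  have key : ∀ ε : ℝ, 0 < ε → MeasureTheory.volume Ω ≤ ENNReal.ofReal (1 / 3 + 2 * ε) := by
    intro ε hε
    obtain ⟨K, hKΩ, hKc, hKμ⟩ := hmeas.exists_isCompact_lt_add (μ := MeasureTheory.volume)
      (measure_ne_top _ _) (ε := ENNReal.ofReal ε) (by simp [hε])
    have hKsf : ∀ x ∈ K, ∀ y ∈ K, x + y ∉ K := by
      intro x hx y hy hxy
      exact hsf x (hKΩ hx) y (hKΩ hy) (x + y) (hKΩ hxy) rfl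
    have hbound := Stmt13Aux.compact_bound K hKc hKsf hε
    calc MeasureTheory.volume Ω ≤ MeasureTheory.volume K + ENNReal.ofReal ε := hKμ.le
      _ ≤ ENNReal.ofReal (1 / 3 + ε) + ENNReal.ofReal ε := add_le_add_left hbound _
      _ = ENNReal.ofReal (1 / 3 + 2 * ε) := by
          rw [← ENNReal.ofReal_add (by linarith) hε.le]
          ring_nf
  have h13 : (1 / 3 : ℝ≥0∞) = ENNReal.ofReal (1 / 3) := by
    rw [ENNReal.ofReal_div_of_pos (by norm_num)]
    simp [ENNReal.ofReal_one, ENNReal.ofReal_ofNat]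
  rw [h13]
  refine ENNReal.le_of_forall_pos_le_add fun η hη _ => ?_
  calc MeasureTheory.volume Ω ≤ ENNReal.ofReal (1 / 3 + 2 * ((η : ℝ) / 2)) :=
        key ((η : ℝ) / 2) (by positivity)
    _ ≤ ENNReal.ofReal (1 / 3) + (η : ℝ≥0∞) := by
        rw [ENNReal.ofReal_add (by norm_num) (by positivity)]
        gcongr
        rw [show ((2 : ℝ) * ((η : ℝ) / 2)) = (η : ℝ) by ring]
        simp [ENNReal.ofReal_coe_nnreal]
end

section
/- Every finite set A of N positive integers contains a sum-free subset S with |S| ≥ N/3, i.e., a subset S in which there are no a, b, c ∈ S (repetitions allowed) with a + b = c. -/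
/-- Every finite set `A` of `N` positive integers contains a sum-free
subset `S` with `|S| ≥ N/3`. -/
theorem stmt14 (A : Finset ℕ) (hpos : ∀ n ∈ A, 0 < n) :
    ∃ S ⊆ A, (¬ ∃ a ∈ S, ∃ b ∈ S, ∃ c ∈ S, a + b = c) ∧
      (S.card : ℝ) ≥ (A.card : ℝ) / 3 := by
  classical
  obtain ⟨p, hp5, hpprime⟩ := Nat.exists_infinite_primes ((A.sup id) + 5)
  haveI : Fact p.Prime := ⟨hpprime⟩
  haveI : NeZero p := ⟨hpprime.ne_zero⟩
  have hp5' : 5 ≤ p := le_trans (Nat.le_add_left 5 _) hp5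
  -- the "middle third" of ZMod p
  set M : Finset (ZMod p) :=
    Finset.univ.filter (fun x => p < 3 * x.val ∧ 3 * x.val < 2 * p) with hM
  -- size of the middle third
  have hMcard : p - 1 ≤ 3 * M.card := by
    have h1 : M.card =
        ((Finset.range p).filter (fun x => p < 3 * x ∧ 3 * x < 2 * p)).card := by
      apply Finset.card_bij (fun x _ => x.val)
      · intro x hx
        simp only [hM, Finset.mem_filter, Finset.mem_univ, true_and, Finset.mem_range] at hx ⊢
        exact ⟨ZMod.val_lt x, hx⟩
      · intro x _ y _ h
        exact ZMod.val_injective p h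
      · intro y hy
        simp only [Finset.mem_filter, Finset.mem_range] at hy
        refine ⟨(y : ZMod p), ?_, ZMod.val_cast_of_lt hy.1⟩
        simp only [hM, Finset.mem_filter, Finset.mem_univ, true_and,
          ZMod.val_cast_of_lt hy.1]
        exact hy.2
    have h2 : (Finset.range p).filter (fun x => p < 3 * x ∧ 3 * x < 2 * p)
        = Finset.Ioo (p / 3) (p - p / 3) := by
      ext x
      simp only [Finset.mem_filter, Finset.mem_range, Finset.mem_Ioo]
      omega
    have h3 : p % 3 ≠ 0 := by
      intro h
      have hd : (3 : ℕ) ∣ p := Nat.dvd_of_mod_eq_zero h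
      have := (Nat.prime_dvd_prime_iff_eq (by norm_num) hpprime).mp hd
      omega
    rw [h1, h2, Nat.card_Ioo]
    omega
  -- elements of A are nonzero mod p
  have hA0 : ∀ a ∈ A, (a : ZMod p) ≠ 0 := by
    intro a ha h
    rw [ZMod.natCast_eq_zero_iff] at h
    have h1 := Nat.le_of_dvd (hpos a ha) h
    have h2 : a ≤ A.sup id := Finset.le_sup (f := id) ha
    omega
  -- for each a ∈ A, the number of nonzero t with t*a in M is M.card
  have hcount : ∀ a ∈ A,
      ((Finset.univ.erase (0 : ZMod p)).filter (fun t => t * (a : ZMod p) ∈ M)).card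
        = M.card := by
    intro a ha
    have ha0 := hA0 a ha
    have hM0 : ∀ y : ZMod p, y ∈ M → y ≠ 0 := by
      intro y hy h0
      simp only [hM, Finset.mem_filter, h0, ZMod.val_zero] at hy
      omega
    apply Finset.card_bij' (fun t _ => t * (a : ZMod p))
      (fun y _ => y * (a : ZMod p)⁻¹)
    · intro t ht
      exact (Finset.mem_filter.mp ht).2
    · intro y hy
      rw [Finset.mem_filter]
      have hya : y * (a : ZMod p)⁻¹ * (a : ZMod p) = y := by
        rw [mul_assoc, inv_mul_cancel₀ ha0, mul_one]
      constructor
      · refine Finset.mem_erase.mpr ⟨?_, Finset.mem_univ _⟩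
        intro h0
        apply hM0 y hy
        rw [← hya, h0, zero_mul]
      · rw [hya]; exact hy
    · intro t ht
      rw [mul_assoc, mul_inv_cancel₀ ha0, mul_one]
    · intro y hy
      rw [mul_assoc, inv_mul_cancel₀ ha0, mul_one]
  -- double counting
  have hsum : ∑ t ∈ (Finset.univ.erase (0 : ZMod p)),
      (A.filter (fun a : ℕ => (t * (a : ZMod p)) ∈ M)).card = A.card * M.card := by
    have step : ∀ t : ZMod p, (A.filter (fun a : ℕ => (t * (a : ZMod p)) ∈ M)).card
        = ∑ a ∈ A, if (t * (a : ZMod p)) ∈ M then 1 else 0 := by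
      intro t; rw [Finset.card_filter]
    simp_rw [step]
    rw [Finset.sum_comm]
    have step2 : ∀ a ∈ A, ∑ t ∈ (Finset.univ.erase (0 : ZMod p)),
        (if (t * (a : ZMod p)) ∈ M then 1 else 0) = M.card := by
      intro a ha
      rw [← Finset.card_filter]
      exact hcount a ha
    rw [Finset.sum_congr rfl step2, Finset.sum_const, smul_eq_mul]
  -- pigeonhole
  have hcardT : (Finset.univ.erase (0 : ZMod p)).card = p - 1 := by
    rw [Finset.card_erase_of_mem (Finset.mem_univ _), Finset.card_univ, ZMod.card]
  have hex : ∃ t ∈ Finset.univ.erase (0 : ZMod p),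
      A.card ≤ 3 * (A.filter (fun a : ℕ => (t * (a : ZMod p)) ∈ M)).card := by
    by_contra hcon
    push_neg at hcon
    have hle : ∑ t ∈ (Finset.univ.erase (0 : ZMod p)),
        (3 * (A.filter (fun a : ℕ => (t * (a : ZMod p)) ∈ M)).card + 1)
        ≤ ∑ t ∈ (Finset.univ.erase (0 : ZMod p)), A.card := by
      apply Finset.sum_le_sum
      intro t ht
      have := hcon t ht
      omega
    rw [Finset.sum_add_distrib, ← Finset.mul_sum, hsum, Finset.sum_const, smul_eq_mul,
      Finset.sum_const, smul_eq_mul, hcardT] at hle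
    -- 3 * (A.card * M.card) + (p-1)*1 ≤ (p-1) * A.card
    have hge : (p - 1) * A.card ≤ 3 * (A.card * M.card) := by
      calc (p - 1) * A.card ≤ (3 * M.card) * A.card := Nat.mul_le_mul_right _ hMcard
        _ = 3 * (A.card * M.card) := by ring
    omega
  obtain ⟨t, ht, hcard⟩ := hex
  refine ⟨A.filter (fun a : ℕ => (t * (a : ZMod p)) ∈ M), Finset.filter_subset _ _, ?_, ?_⟩
  · rintro ⟨a, ha, b, hb, c, hc, habc⟩
    rw [Finset.mem_filter] at ha hb hc
    have hxa := ha.2; have hxb := hb.2; have hxc := hc.2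
    simp only [hM, Finset.mem_filter, Finset.mem_univ, true_and] at hxa hxb hxc
    set x := (t * (a : ZMod p)).val with hx
    set y := (t * (b : ZMod p)).val with hy
    set z := (t * (c : ZMod p)).val with hz
    have hzeq : (t * (c : ZMod p)) = t * (a : ZMod p) + t * (b : ZMod p) := by
      rw [← mul_add, ← Nat.cast_add, habc]
    have hmod : z = (x + y) % p := by
      rw [hz, hzeq, ZMod.val_add]
    have hxlt : x < p := ZMod.val_lt _
    have hylt : y < p := ZMod.val_lt _
    rcases Nat.lt_or_ge (x + y) p with h | h
    · rw [Nat.mod_eq_of_lt h] at hmod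
      omega
    · rw [Nat.mod_eq_sub_mod h, Nat.mod_eq_of_lt (by omega : x + y - p < p)] at hmod
      omega
  · rw [ge_iff_le, div_le_iff₀ (by norm_num : (0 : ℝ) < 3)]
    have : (A.card : ℝ) ≤ (A.filter (fun a : ℕ => (t * (a : ZMod p)) ∈ M)).card * 3 := by
      exact_mod_cast (by omega : A.card ≤ (A.filter (fun a : ℕ => (t * (a : ZMod p)) ∈ M)).card * 3)
    exact this
end

section
/- Define χ(n) = 1 if n ≡ 1 (mod 3), χ(n) = −1 if n ≡ 2 (mod 3), and χ(n) = 0 if 3 divides n. Then for every real number x whose fractional part {x} is neither 1/3 nor 2/3, the series Σ_{n=1}^∞ χ(n) cos(2πnx)/n converges, and 1_{(1/3,2/3)}({x}) − 1/3 = −(√3/π) · Σ_{n=1}^∞ χ(n) cos(2πnx)/n. -/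
open Filter Finset Complex

lemma sawtooth {θ : ℝ} (h0 : 0 < θ) (h2 : θ < 2 * Real.pi) :
    Filter.Tendsto (fun N : ℕ => ∑ n ∈ Finset.range N, Real.sin (n * θ) / n)
      Filter.atTop (nhds ((Real.pi - θ) / 2)) := by
  set z : ℂ := Complex.exp (θ * Complex.I) with hzdef
  have hznorm : ‖z‖ = 1 := by
    rw [hzdef, Complex.norm_exp_ofReal_mul_I]
  have hzne : z ≠ 1 := by
    intro h
    rw [hzdef, Complex.exp_eq_one_iff] at h
    obtain ⟨n, hn⟩ := h
    have h' : (θ : ℂ) = ((n * (2 * Real.pi) : ℝ) : ℂ) := by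
      have := mul_right_cancel₀ Complex.I_ne_zero
        (by push_cast; linear_combination hn :
          (θ : ℂ) * Complex.I = ((n * (2 * Real.pi) : ℝ) : ℂ) * Complex.I)
      exact this
    have hθ : θ = n * (2 * Real.pi) := by exact_mod_cast h'
    have hpi := Real.pi_pos
    rcases le_or_gt (n : ℝ) 0 with h1 | h1
    · nlinarith
    · have : (1 : ℝ) ≤ n := by exact_mod_cast h1
      nlinarith
  have h1zne : (1 : ℂ) - z ≠ 0 := by
    intro h; apply hzne; linear_combination -h
  have hz1ne : z - 1 ≠ 0 := by
    intro h; apply hzne; linear_combination h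
  -- Dirichlet test: partial sums of z^n/n converge
  have hgeom : ∀ n : ℕ, ‖∑ i ∈ range n, z ^ (i + 1)‖ ≤ 2 / ‖1 - z‖ := by
    intro n
    have : ∑ i ∈ range n, z ^ (i + 1) = z * ((z ^ n - 1) / (z - 1)) := by
      rw [← geom_sum_eq hzne n, Finset.mul_sum]
      exact Finset.sum_congr rfl fun i _ => by ring
    rw [this, norm_mul, hznorm, one_mul, norm_div]
    rw [div_le_div_iff₀ (norm_pos_iff.mpr hz1ne) (norm_pos_iff.mpr h1zne)]
    have h1 : ‖z ^ n - 1‖ ≤ 2 := by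
      calc ‖z ^ n - 1‖ ≤ ‖z ^ n‖ + ‖(1:ℂ)‖ := norm_sub_le _ _
        _ = 2 := by rw [norm_pow, hznorm]; norm_num
    have h2 : ‖z - 1‖ = ‖1 - z‖ := by rw [← norm_neg]; ring_nf
    nlinarith [norm_nonneg (z - 1), norm_nonneg (1 - z)]
  have hanti : Antitone fun n : ℕ => ((n : ℝ) + 1)⁻¹ := by
    intro m n hmn
    apply inv_anti₀ (by positivity)
    simp only [add_le_add_iff_right, Nat.cast_le]; exact hmn
  have hto0 : Filter.Tendsto (fun n : ℕ => ((n : ℝ) + 1)⁻¹) atTop (nhds 0) := by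
    simpa only [one_div] using tendsto_one_div_add_atTop_nhds_zero_nat (𝕜 := ℝ)
  have hcauchy := hanti.cauchySeq_series_mul_of_tendsto_zero_of_bounded hto0 hgeom
  obtain ⟨S, hS⟩ := cauchySeq_tendsto_of_complete hcauchy
  set F : ℕ → ℂ := fun n => z ^ n / n with hF
  have hF0 : F 0 = 0 := by simp [hF]
  have hsum_eq : ∀ n : ℕ, ∑ i ∈ range n, ((i : ℝ) + 1)⁻¹ • z ^ (i + 1)
      = ∑ i ∈ range (n + 1), F i := by
    intro n
    rw [Finset.sum_range_succ' (fun i => F i) n, hF0, add_zero]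
    refine Finset.sum_congr rfl fun i _ => ?_
    simp only [hF]
    rw [Complex.real_smul]
    push_cast
    rw [div_eq_inv_mul]
  have hS' : Filter.Tendsto (fun n : ℕ => ∑ i ∈ range n, F i) atTop (nhds S) := by
    rw [← tendsto_add_atTop_iff_nat 1]
    exact hS.congr hsum_eq
  -- Abel's limit theorem
  have habel : Filter.Tendsto (fun r : ℝ => ∑' n : ℕ, F n * (r : ℂ) ^ n)
      (nhdsWithin 1 (Set.Iio 1)) (nhds S) := by
    have h1 := Complex.tendsto_tsum_powerSeries_nhdsWithin_stolzSet (f := F) (l := S) hS' (M := 2)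
    have h2 := Complex.nhdsWithin_lt_le_nhdsWithin_stolzSet (one_lt_two)
    exact h1.comp (by rwa [Filter.tendsto_iff_comap, ← Filter.map_le_iff_le_comap])
  -- identify with -log (1 - r z)
  have hident : ∀ r : ℝ, r ∈ Set.Ioo (-1 : ℝ) 1 →
      ∑' n : ℕ, F n * (r : ℂ) ^ n = -Complex.log (1 - r * z) := by
    intro r hr
    have hnorm : ‖(r : ℂ) * z‖ < 1 := by
      rw [norm_mul, hznorm, mul_one, Complex.norm_real, Real.norm_eq_abs]
      exact abs_lt.mpr ⟨hr.1, hr.2⟩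
    have := Complex.hasSum_taylorSeries_neg_log hnorm
    rw [← this.tsum_eq]
    refine tsum_congr fun n => ?_
    simp only [hF, mul_pow]
    ring
  have habel' : Filter.Tendsto (fun r : ℝ => -Complex.log (1 - r * z))
      (nhdsWithin 1 (Set.Iio 1)) (nhds S) := by
    refine habel.congr' ?_
    filter_upwards [Ioo_mem_nhdsLT_of_mem (⟨by norm_num, le_refl 1⟩ : (1:ℝ) ∈ Set.Ioc (-1:ℝ) 1)]
      with r hr using hident r hr
  -- slit plane membership
  have hslit : (1 : ℂ) - z ∈ Complex.slitPlane := by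
    rw [Complex.mem_slitPlane_iff]
    by_contra hcon
    push_neg at hcon
    obtain ⟨hre, him⟩ := hcon
    apply hzne
    have himz : z.im = 0 := by
      rw [Complex.sub_im, Complex.one_im] at him; linarith
    have hrez : 1 ≤ z.re := by
      rw [Complex.sub_re, Complex.one_re] at hre; linarith
    have habs : z.re ^ 2 + z.im ^ 2 = 1 := by
      have := Complex.sq_norm z
      rw [Complex.normSq_apply] at this
      nlinarith [this, hznorm]
    have : z.re = 1 := by nlinarith
    exact Complex.ext (by simp [this]) (by simp [himz])
  have hcont : Filter.Tendsto (fun r : ℝ => -Complex.log (1 - r * z))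
      (nhdsWithin 1 (Set.Iio 1)) (nhds (-Complex.log (1 - z))) := by
    have hc1 : Filter.Tendsto (fun r : ℝ => (1 : ℂ) - r * z) (nhds 1) (nhds (1 - z)) := by
      have : Continuous fun r : ℝ => (1 : ℂ) - r * z := by continuity
      have := this.tendsto 1
      simpa using this
    have hc2 := (continuousAt_clog hslit).tendsto
    exact ((hc2.comp (hc1.mono_left nhdsWithin_le_nhds))).neg
  have hSval : S = -Complex.log (1 - z) :=
    tendsto_nhds_unique habel' hcont
  -- take imaginary parts
  have himS : Filter.Tendsto (fun n : ℕ => ∑ i ∈ range n, Real.sin (i * θ) / i)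
      atTop (nhds S.im) := by
    have := (Complex.continuous_im.tendsto S).comp hS'
    refine this.congr fun n => ?_
    simp only [Function.comp]
    rw [Complex.im_sum]
    refine Finset.sum_congr rfl fun i _ => ?_
    simp only [hF]
    have hzi : z ^ i = Complex.exp ((i * θ : ℝ) * Complex.I) := by
      rw [hzdef, ← Complex.exp_nat_mul]
      push_cast; ring_nf
    rw [hzi]
    rw [show ((i : ℂ)) = ((i : ℝ) : ℂ) by push_cast; rfl]
    rw [Complex.div_ofReal_im]
    rw [Complex.exp_ofReal_mul_I_im]
  -- compute the imaginary part of -log(1-z)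
  have harg : (1 : ℂ) - z = ((2 * Real.sin (θ / 2) : ℝ) : ℂ)
      * Complex.exp (((θ - Real.pi) / 2 : ℝ) * Complex.I) := by
    rw [hzdef]
    apply Complex.ext
    · simp only [Complex.sub_re, Complex.one_re, Complex.exp_ofReal_mul_I_re,
        Complex.mul_re, Complex.ofReal_re, Complex.ofReal_im,
        Complex.exp_ofReal_mul_I_im]
      have hc : Real.cos ((θ - Real.pi) / 2) = Real.sin (θ / 2) := by
        rw [show (θ - Real.pi) / 2 = θ / 2 - Real.pi / 2 by ring, Real.cos_sub_pi_div_two]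
      have hcosθ : Real.cos θ = 1 - 2 * Real.sin (θ / 2) ^ 2 := by
        have h := Real.cos_two_mul' (x := θ / 2)
        rw [show 2 * (θ / 2) = θ by ring] at h
        nlinarith [Real.sin_sq_add_cos_sq (θ / 2)]
      rw [hc]
      nlinarith [hcosθ]
    · simp only [Complex.sub_im, Complex.one_im, Complex.exp_ofReal_mul_I_im,
        Complex.mul_im, Complex.ofReal_re, Complex.ofReal_im,
        Complex.exp_ofReal_mul_I_re]
      have hs : Real.sin ((θ - Real.pi) / 2) = -Real.cos (θ / 2) := by
        rw [show (θ - Real.pi) / 2 = θ / 2 - Real.pi / 2 by ring, Real.sin_sub_pi_div_two]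
      have hsinθ : Real.sin θ = 2 * Real.sin (θ / 2) * Real.cos (θ / 2) := by
        have h := Real.sin_two_mul (θ / 2)
        rw [show 2 * (θ / 2) = θ by ring] at h
        linarith
      rw [hs]
      nlinarith [hsinθ]
  have hsinpos : 0 < Real.sin (θ / 2) := by
    apply Real.sin_pos_of_pos_of_lt_pi <;> [linarith; linarith [Real.pi_pos]]
  have hargval : Complex.arg (1 - z) = (θ - Real.pi) / 2 := by
    rw [harg]
    rw [show ((2 * Real.sin (θ / 2) : ℝ) : ℂ) * Complex.exp (((θ - Real.pi) / 2 : ℝ) * Complex.I)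
      = ((2 * Real.sin (θ / 2) : ℝ) : ℂ) * (Complex.cos ((θ - Real.pi) / 2 : ℝ)
        + Complex.sin ((θ - Real.pi) / 2 : ℝ) * Complex.I) by rw [Complex.exp_mul_I]]
    rw [Complex.arg_real_mul _ (by positivity)]
    exact Complex.arg_cos_add_sin_mul_I
      ⟨by linarith [Real.pi_pos], by linarith [Real.pi_pos]⟩
  have hSim : S.im = (Real.pi - θ) / 2 := by
    rw [hSval, Complex.neg_im, Complex.log_im, hargval]; ring
  rw [← hSim]
  exact himS

lemma IccEq (θ : ℝ) (N : ℕ) : ∑ n ∈ Finset.Icc 1 N, Real.sin (n * θ) / n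
    = ∑ n ∈ Finset.range (N + 1), Real.sin (n * θ) / n := by
  refine Finset.sum_subset (fun n hn => ?_) (fun n hn hn' => ?_)
  · rw [Finset.mem_Icc] at hn; rw [Finset.mem_range]; omega
  · rw [Finset.mem_range] at hn; rw [Finset.mem_Icc] at hn'
    have : n = 0 := by omega
    subst this; simp



/-- With `χ(n) = 1` for `n ≡ 1 (mod 3)`, `χ(n) = −1` for `n ≡ 2 (mod 3)`,
`χ(n) = 0` for `3 ∣ n`: for every real `x` whose fractional part is neither `1/3` nor
`2/3`, the series `Σ_{n≥1} χ(n) cos(2πnx)/n` converges, and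
`1_{(1/3,2/3)}({x}) − 1/3 = −(√3/π) Σ_{n≥1} χ(n) cos(2πnx)/n`. -/
theorem stmt16 (x : ℝ) (h1 : Int.fract x ≠ 1/3) (h2 : Int.fract x ≠ 2/3) :
    ∃ L : ℝ,
      Filter.Tendsto (fun N : ℕ => ∑ n ∈ Finset.Icc 1 N,
          (if n % 3 = 1 then (1:ℝ) else if n % 3 = 2 then -1 else 0) *
            Real.cos (2 * Real.pi * n * x) / n)
        Filter.atTop (nhds L) ∧
      (if 1/3 < Int.fract x ∧ Int.fract x < 2/3 then (1:ℝ) else 0) - 1/3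
        = -(Real.sqrt 3 / Real.pi) * L := by
  have hpi := Real.pi_pos
  set u := Int.fract x with hu
  have hu0 : 0 ≤ u := Int.fract_nonneg x
  have hu1 : u < 1 := Int.fract_lt_one x
  obtain ⟨a, b, ha0, ha1, hb0, hb1, hma, hmb, hfin⟩ :
      ∃ a b : ℝ, 0 < a ∧ a < 1 ∧ 0 < b ∧ b < 1 ∧ (∃ m : ℤ, x + 1/3 = m + a) ∧
        (∃ m : ℤ, 1/3 - x = m + b) ∧
        ((if 1/3 < u ∧ u < 2/3 then (1:ℝ) else 0) - 1/3 = a + b - 1) := by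
    have hx : x = ⌊x⌋ + u := by rw [hu]; exact (Int.floor_add_fract x).symm
    rcases lt_trichotomy u (1/3) with h | h | h
    · exact ⟨u + 1/3, 1/3 - u, by linarith, by linarith, by linarith, by linarith,
        ⟨⌊x⌋, by linarith⟩, ⟨-⌊x⌋, by push_cast; linarith⟩, by
          rw [if_neg (by push_neg; intro hc; linarith)]; ring⟩
    · exact absurd h h1
    · rcases lt_trichotomy u (2/3) with h' | h' | h'
      · exact ⟨u + 1/3, 4/3 - u, by linarith, by linarith, by linarith, by linarith,
          ⟨⌊x⌋, by linarith⟩, ⟨-⌊x⌋ - 1, by push_cast; linarith⟩, by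
            rw [if_pos ⟨h, h'⟩]; ring⟩
      · exact absurd h' h2
      · exact ⟨u - 2/3, 4/3 - u, by linarith, by linarith, by linarith, by linarith,
          ⟨⌊x⌋ + 1, by push_cast; linarith⟩, ⟨-⌊x⌋ - 1, by push_cast; linarith⟩, by
            rw [if_neg (by push_neg; intro hc; linarith)]; ring⟩
  obtain ⟨ma, hma'⟩ := hma
  obtain ⟨mb, hmb'⟩ := hmb
  have h3ne : Real.sqrt 3 ≠ 0 := by positivity
  refine ⟨(Real.sqrt 3)⁻¹ * ((Real.pi - 2*Real.pi*a)/2 + (Real.pi - 2*Real.pi*b)/2), ?_, ?_⟩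
  · have hta := (sawtooth (θ := 2*Real.pi*a) (by positivity) (by nlinarith)).comp
      (tendsto_add_atTop_nat 1)
    have htb := (sawtooth (θ := 2*Real.pi*b) (by positivity) (by nlinarith)).comp
      (tendsto_add_atTop_nat 1)
    have hcomb := (hta.add htb).const_mul ((Real.sqrt 3)⁻¹)
    refine Filter.Tendsto.congr (fun N => ?_) hcomb
    simp only [Function.comp]
    rw [← IccEq (2*Real.pi*a) N, ← IccEq (2*Real.pi*b) N, ← Finset.sum_add_distrib,
      Finset.mul_sum]
    refine Finset.sum_congr rfl fun n hn => ?_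
    rw [Finset.mem_Icc] at hn
    have hn0 : (n : ℝ) ≠ 0 := by
      simp only [ne_eq, Nat.cast_eq_zero]; omega
    have e1 : Real.sin ((n:ℝ) * (2*Real.pi*a)) = Real.sin (2*Real.pi*n*(x+1/3)) := by
      rw [show (n:ℝ) * (2*Real.pi*a) = 2*Real.pi*n*(x+1/3) - ((n : ℤ) * ma : ℤ) * (2*Real.pi) by
        push_cast; linear_combination (-(2*Real.pi*(n:ℝ))) * hma']
      exact Real.sin_sub_int_mul_two_pi _ _
    have e2 : Real.sin ((n:ℝ) * (2*Real.pi*b)) = Real.sin (2*Real.pi*n*(1/3-x)) := by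
      rw [show (n:ℝ) * (2*Real.pi*b) = 2*Real.pi*n*(1/3-x) - ((n : ℤ) * mb : ℤ) * (2*Real.pi) by
        push_cast; linear_combination (-(2*Real.pi*(n:ℝ))) * hmb']
      exact Real.sin_sub_int_mul_two_pi _ _
    have e3 : Real.sin (2*Real.pi*n*(x+1/3)) + Real.sin (2*Real.pi*n*(1/3-x))
        = 2 * Real.sin (2*Real.pi*n/3) * Real.cos (2*Real.pi*n*x) := by
      rw [show 2*Real.pi*(n:ℝ)*(x+1/3) = 2*Real.pi*n/3 + 2*Real.pi*n*x by ring,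
        show 2*Real.pi*(n:ℝ)*(1/3-x) = 2*Real.pi*n/3 - 2*Real.pi*n*x by ring,
        Real.sin_add, Real.sin_sub]
      ring
    have e4 : Real.sin (2*Real.pi*(n:ℝ)/3) = Real.sqrt 3 / 2 *
        (if n % 3 = 1 then (1:ℝ) else if n % 3 = 2 then -1 else 0) := by
      have hdm : 3 * (n / 3) + n % 3 = n := Nat.div_add_mod n 3
      have hcast : 3 * ((n/3 : ℕ):ℝ) + ((n % 3 : ℕ):ℝ) = (n:ℝ) := by exact_mod_cast hdm
      have hper : Real.sin (2*Real.pi*(n:ℝ)/3) = Real.sin (2*Real.pi*((n % 3 : ℕ):ℝ)/3) := by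
        rw [show 2*Real.pi*(n:ℝ)/3 = 2*Real.pi*((n % 3 : ℕ):ℝ)/3 + ((n / 3 : ℕ) : ℤ) * (2*Real.pi)
          by rw [Int.cast_natCast]; linear_combination (-(2*Real.pi/3)) * hcast]
        exact Real.sin_add_int_mul_two_pi _ _
      rw [hper]
      have h3cases : n % 3 = 0 ∨ n % 3 = 1 ∨ n % 3 = 2 := by omega
      rcases h3cases with h | h | h
      · rw [h]; norm_num
      · rw [h, show 2*Real.pi*((1:ℕ):ℝ)/3 = Real.pi - Real.pi/3 by push_cast; ring,
          Real.sin_pi_sub, Real.sin_pi_div_three]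
        norm_num
      · rw [h, show 2*Real.pi*((2:ℕ):ℝ)/3 = Real.pi + Real.pi/3 by push_cast; ring,
          Real.sin_add]
        norm_num [Real.sin_pi_div_three]
    rw [e1, e2, ← add_div, e3, e4]
    field_simp
  · rw [hfin]
    have hπ : Real.pi ≠ 0 := ne_of_gt hpi
    field_simp
    ring
end
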